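/- arXiv:1311.4643 — 11 statements merged into one kernel-verified Lean document; each statement's English description precedes it below -/
import Mathlib

section
/- For every m×n real matrix A and every sampling distribution p on the entries of A, σ̃(p)² ≥ ∑_{i=1}^m ‖A_(i)‖₁². -/
/-- For every `m×n` real matrix `A` and every sampling distribution `p` on its entries,
`σ̃(p)² ≥ ∑_i ‖A_(i)‖₁²`. -/
theorem stmt2 (m n : ℕ) (hm : 0 < m) (hn : 0 < n)
    (A : Matrix (Fin m) (Fin n) ℝ) (p : Fin m → Fin n → ℝ)
    (hp0 : ∀ i j, 0 ≤ p i j) (hpsum : ∑ i, ∑ j, p i j = 1)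
    (hppos : ∀ i j, A i j ≠ 0 → 0 < p i j) :
    ∑ i, (∑ j, |A i j|) ^ 2 ≤
      max (⨆ i, ∑ j, A i j ^ 2 / p i j) (⨆ j, ∑ i, A i j ^ 2 / p i j) := by
  haveI : Nonempty (Fin m) := ⟨⟨0, hm⟩⟩
  set M := ⨆ i, ∑ j, A i j ^ 2 / p i j with hM
  refine le_trans ?_ (le_max_left _ _)
  -- Cauchy–Schwarz per row
  have row : ∀ i, (∑ j, |A i j|) ^ 2 ≤ (∑ j, p i j) * (∑ j, A i j ^ 2 / p i j) := by
    intro i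
    have cs := Finset.sum_mul_sq_le_sq_mul_sq Finset.univ
      (fun j => Real.sqrt (p i j)) (fun j => |A i j| / Real.sqrt (p i j))
    have h1 : ∀ j, Real.sqrt (p i j) * (|A i j| / Real.sqrt (p i j)) = |A i j| := by
      intro j
      rcases eq_or_ne (A i j) 0 with h | h
      · simp [h]
      · have hp := hppos i j h
        have : Real.sqrt (p i j) ≠ 0 := by positivity
        field_simp
    have h2 : ∀ j, Real.sqrt (p i j) ^ 2 = p i j := fun j => Real.sq_sqrt (hp0 i j)
    have h3 : ∀ j, (|A i j| / Real.sqrt (p i j)) ^ 2 = A i j ^ 2 / p i j := by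
      intro j
      rw [div_pow, sq_abs, h2]
    simpa only [h1, h2, h3] using cs
  have hMb : ∀ i, (∑ j, A i j ^ 2 / p i j) ≤ M := fun i =>
    le_ciSup (f := fun i => ∑ j, A i j ^ 2 / p i j) (Set.Finite.bddAbove (Set.finite_range _)) i
  have hM0 : 0 ≤ M := le_trans (Finset.sum_nonneg fun j _ => div_nonneg (sq_nonneg _) (hp0 _ j)) (hMb ⟨0, hm⟩)
  calc ∑ i, (∑ j, |A i j|) ^ 2
      ≤ ∑ i, (∑ j, p i j) * M := by
        refine Finset.sum_le_sum fun i _ => le_trans (row i) ?_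
        exact mul_le_mul_of_nonneg_left (hMb i) (Finset.sum_nonneg fun j _ => hp0 i j)
    _ = M := by rw [← Finset.sum_mul, hpsum, one_mul]
end

section
/- Let A be a nonzero m×n real matrix and p any sampling distribution on the entries of A. Then |σ(p)²/σ̃(p)² − 1| ≤ ‖A‖₂² / (∑_{i=1}^m ‖A_(i)‖₁²). -/
open Matrix

/-- The spectral norm (ℓ2→ℓ2 operator norm) of a rectangular real matrix. -/
noncomputable def specNorm {m n : ℕ} (A : Matrix (Fin m) (Fin n) ℝ) : ℝ :=
  ‖(Matrix.toEuclideanLin A).toContinuousLinearMap‖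

/-- `σ̃(p)²`: the maximum over rows and columns of `∑ (A i j)² / p i j`. -/
noncomputable def sigmaTildeSq {m n : ℕ} (A : Matrix (Fin m) (Fin n) ℝ)
    (p : Fin m → Fin n → ℝ) : ℝ :=
  max (⨆ i, ∑ j, A i j ^ 2 / p i j) (⨆ j, ∑ i, A i j ^ 2 / p i j)

/-- `σ(p)² = max{ ‖D_r(p) − A Aᵀ‖₂, ‖D_c(p) − Aᵀ A‖₂ }`. -/
noncomputable def sigmaSq {m n : ℕ} (A : Matrix (Fin m) (Fin n) ℝ)
    (p : Fin m → Fin n → ℝ) : ℝ :=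
  max (specNorm (Matrix.diagonal (fun i => ∑ j, A i j ^ 2 / p i j) - A * Aᵀ))
      (specNorm (Matrix.diagonal (fun j => ∑ i, A i j ^ 2 / p i j) - Aᵀ * A))

section helpers

open scoped Matrix.Norms.L2Operator

variable {m n k : ℕ}

lemma specNorm_eq_norm (A : Matrix (Fin m) (Fin n) ℝ) : specNorm A = ‖A‖ := rfl

lemma real_conjT (A : Matrix (Fin m) (Fin n) ℝ) : Aᴴ = Aᵀ := by
  ext i j; simp [conjTranspose]

lemma specNorm_transpose (A : Matrix (Fin m) (Fin n) ℝ) : specNorm Aᵀ = specNorm A := by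
  rw [specNorm_eq_norm, specNorm_eq_norm, ← real_conjT, Matrix.l2_opNorm_conjTranspose]

lemma specNorm_mul_le (A : Matrix (Fin m) (Fin n) ℝ) (B : Matrix (Fin n) (Fin k) ℝ) :
    specNorm (A * B) ≤ specNorm A * specNorm B := Matrix.l2_opNorm_mul A B

lemma specNorm_sub_le (A B : Matrix (Fin m) (Fin n) ℝ) :
    specNorm (A - B) ≤ specNorm A + specNorm B := by
  rw [specNorm_eq_norm, specNorm_eq_norm, specNorm_eq_norm]; exact norm_sub_le A B

lemma entry_le_specNorm (A : Matrix (Fin m) (Fin n) ℝ) (i : Fin m) (j : Fin n) :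
    |A i j| ≤ specNorm A := by
  have h := Matrix.l2_opNorm_mulVec A (EuclideanSpace.single j (1:ℝ))
  rw [EuclideanSpace.norm_single, norm_one, mul_one] at h
  refine le_trans ?_ h
  set y : EuclideanSpace ℝ (Fin m) :=
    (EuclideanSpace.equiv (Fin m) ℝ).symm (A *ᵥ (EuclideanSpace.single j (1:ℝ))) with hy
  have hyi : y i = A i j := by
    simp [hy, Matrix.mulVec, dotProduct, EuclideanSpace.single_apply]
  calc |A i j| = √((y i)^2) := by rw [hyi, Real.sqrt_sq_eq_abs]
    _ ≤ ‖y‖ := by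
        rw [EuclideanSpace.norm_eq]
        apply Real.sqrt_le_sqrt
        have : ‖y i‖^2 = (y i)^2 := by rw [Real.norm_eq_abs, sq_abs]
        rw [← this]
        exact Finset.single_le_sum (f := fun i => ‖y i‖^2)
          (fun _ _ => sq_nonneg _) (Finset.mem_univ i)

lemma specNorm_diagonal_le (d : Fin m → ℝ) (b : ℝ) (hb : 0 ≤ b) (h : ∀ i, |d i| ≤ b) :
    specNorm (Matrix.diagonal d) ≤ b := by
  rw [specNorm_eq_norm, Matrix.l2_opNorm_def]
  apply ContinuousLinearMap.opNorm_le_bound _ hb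
  intro x
  have happ : ∀ i, (((Matrix.toEuclideanLin (𝕜 := ℝ) (m := Fin m) (n := Fin m)).trans
      LinearMap.toContinuousLinearMap) (Matrix.diagonal d) x) i = d i * x i := by
    intro i
    simp [LinearEquiv.trans_apply, Matrix.toEuclideanLin_apply, Matrix.mulVec_diagonal]
  rw [EuclideanSpace.norm_eq, EuclideanSpace.norm_eq]
  rw [show b * √(∑ i, ‖x i‖^2) = √(b^2 * ∑ i, ‖x i‖^2) by
    rw [Real.sqrt_mul (sq_nonneg b), Real.sqrt_sq hb]]
  apply Real.sqrt_le_sqrt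
  rw [Finset.mul_sum]
  apply Finset.sum_le_sum
  intro i _
  rw [happ i, Real.norm_eq_abs, abs_mul, mul_pow]
  calc |d i|^2 * |x i|^2 ≤ b^2 * |x i|^2 := by
        apply mul_le_mul_of_nonneg_right _ (sq_nonneg _)
        exact pow_le_pow_left₀ (abs_nonneg _) (h i) 2
    _ = b^2 * ‖x i‖^2 := by rw [Real.norm_eq_abs]

lemma rowCS (A : Matrix (Fin m) (Fin n) ℝ) (p : Fin m → Fin n → ℝ)
    (hp0 : ∀ i j, 0 ≤ p i j) (hppos : ∀ i j, A i j ≠ 0 → 0 < p i j) (i : Fin m) :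
    (∑ j, |A i j|)^2 ≤ (∑ j, p i j) * ∑ j, A i j ^ 2 / p i j := by
  have key : ∀ j, √(p i j) * √(A i j ^ 2 / p i j) = |A i j| := by
    intro j
    by_cases h0 : A i j = 0
    · simp [h0]
    · have hp := hppos i j h0
      rw [← Real.sqrt_mul (hp0 i j), mul_div_cancel₀ _ hp.ne', Real.sqrt_sq_eq_abs]
  have h := Finset.sum_mul_sq_le_sq_mul_sq Finset.univ
    (fun j => √(p i j)) (fun j => √(A i j ^ 2 / p i j))
  simp only [key, Real.sq_sqrt (hp0 i _),
    Real.sq_sqrt (div_nonneg (sq_nonneg _) (hp0 i _))] at h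
  exact h

lemma argmax_iSup {N : ℕ} (hN : 0 < N) (f : Fin N → ℝ) :
    ∃ i0, (∀ i, f i ≤ f i0) ∧ (⨆ i, f i) = f i0 := by
  have : Nonempty (Fin N) := ⟨⟨0, hN⟩⟩
  obtain ⟨i0, hi0⟩ := Finite.exists_max f
  exact ⟨i0, hi0, le_antisymm (ciSup_le hi0) (le_ciSup (Finite.bddAbove_range f) i0)⟩

end helpers

/-- For a nonzero matrix `A` and any sampling distribution `p`,
`|σ(p)²/σ̃(p)² − 1| ≤ ‖A‖₂² / ∑_i ‖A_(i)‖₁²`. -/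
theorem stmt3 (m n : ℕ) (hm : 0 < m) (hn : 0 < n)
    (A : Matrix (Fin m) (Fin n) ℝ) (hA : A ≠ 0) (p : Fin m → Fin n → ℝ)
    (hp0 : ∀ i j, 0 ≤ p i j) (hpsum : ∑ i, ∑ j, p i j = 1)
    (hppos : ∀ i j, A i j ≠ 0 → 0 < p i j) :
    |sigmaSq A p / sigmaTildeSq A p - 1| ≤ specNorm A ^ 2 / ∑ i, (∑ j, |A i j|) ^ 2 := by
  classical
  set R : Fin m → ℝ := fun i => ∑ j, A i j ^ 2 / p i j with hRdef
  set C : Fin n → ℝ := fun j => ∑ i, A i j ^ 2 / p i j with hCdef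
  have hR0 : ∀ i, 0 ≤ R i := fun i =>
    Finset.sum_nonneg fun j _ => div_nonneg (sq_nonneg _) (hp0 i j)
  have hC0 : ∀ j, 0 ≤ C j := fun j =>
    Finset.sum_nonneg fun i _ => div_nonneg (sq_nonneg _) (hp0 i j)
  obtain ⟨i0, hi0, hRsup⟩ := argmax_iSup hm R
  obtain ⟨j0, hj0, hCsup⟩ := argmax_iSup hn C
  set T := sigmaTildeSq A p with hTdef
  have hT : T = max (R i0) (C j0) := by
    rw [hTdef, sigmaTildeSq, ← hRsup, ← hCsup]
  have hRT : R i0 ≤ T := hT ▸ le_max_left _ _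
  have hCT : C j0 ≤ T := hT ▸ le_max_right _ _
  set S := ∑ i, (∑ j, |A i j|) ^ 2 with hSdef
  -- S is positive
  have hS0 : 0 < S := by
    have hex : ∃ i j, A i j ≠ 0 := by
      by_contra h
      push_neg at h
      exact hA (by ext i j; simp [h])
    obtain ⟨i, j, hij⟩ := hex
    refine Finset.sum_pos' (fun i _ => sq_nonneg _) ⟨i, Finset.mem_univ i, ?_⟩
    have h1 : 0 < ∑ j, |A i j| :=
      Finset.sum_pos' (fun j _ => abs_nonneg _)
        ⟨j, Finset.mem_univ j, abs_pos.mpr hij⟩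
    positivity
  -- S ≤ T
  have hST : S ≤ T := by
    have h1 : S ≤ ∑ i, (∑ j, p i j) * R i :=
      Finset.sum_le_sum fun i _ => rowCS A p hp0 hppos i
    have h2 : ∑ i, (∑ j, p i j) * R i ≤ ∑ i, (∑ j, p i j) * R i0 :=
      Finset.sum_le_sum fun i _ =>
        mul_le_mul_of_nonneg_left (hi0 i) (Finset.sum_nonneg fun j _ => hp0 i j)
    have h3 : ∑ i, (∑ j, p i j) * R i0 = R i0 := by
      rw [← Finset.sum_mul, hpsum, one_mul]
    calc S ≤ ∑ i, (∑ j, p i j) * R i := h1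
      _ ≤ ∑ i, (∑ j, p i j) * R i0 := h2
      _ = R i0 := h3
      _ ≤ T := hRT
  have hTpos : 0 < T := hS0.trans_le hST
  set N2 := specNorm A ^ 2 with hN2def
  have hAAT : specNorm (A * Aᵀ) ≤ N2 := by
    calc specNorm (A * Aᵀ) ≤ specNorm A * specNorm Aᵀ := specNorm_mul_le A Aᵀ
      _ = N2 := by rw [specNorm_transpose, hN2def, sq]
  have hATA : specNorm (Aᵀ * A) ≤ N2 := by
    calc specNorm (Aᵀ * A) ≤ specNorm Aᵀ * specNorm A := specNorm_mul_le Aᵀ A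
      _ = N2 := by rw [specNorm_transpose, hN2def, sq]
  set σ := sigmaSq A p with hσdef
  -- upper bound : σ ≤ T + N2
  have hup : σ ≤ T + N2 := by
    rw [hσdef, sigmaSq]
    apply max_le
    · calc specNorm (Matrix.diagonal (fun i => ∑ j, A i j ^ 2 / p i j) - A * Aᵀ)
          ≤ specNorm (Matrix.diagonal R) + specNorm (A * Aᵀ) := specNorm_sub_le _ _
        _ ≤ T + N2 := by
            refine add_le_add ?_ hAAT
            exact specNorm_diagonal_le R T hTpos.le fun i => by
              rw [abs_of_nonneg (hR0 i)]; exact (hi0 i).trans hRT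
    · calc specNorm (Matrix.diagonal (fun j => ∑ i, A i j ^ 2 / p i j) - Aᵀ * A)
          ≤ specNorm (Matrix.diagonal C) + specNorm (Aᵀ * A) := specNorm_sub_le _ _
        _ ≤ T + N2 := by
            refine add_le_add ?_ hATA
            exact specNorm_diagonal_le C T hTpos.le fun j => by
              rw [abs_of_nonneg (hC0 j)]; exact (hj0 j).trans hCT
  -- lower bound : T - N2 ≤ σ
  have hlow : T - N2 ≤ σ := by
    have hrow : R i0 - N2 ≤ σ := by
      have e1 : (Matrix.diagonal R - A * Aᵀ) i0 i0 = R i0 - (A * Aᵀ) i0 i0 := by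
        simp [Matrix.sub_apply, Matrix.diagonal_apply_eq]
      have e2 : |(A * Aᵀ) i0 i0| ≤ N2 :=
        (entry_le_specNorm (A * Aᵀ) i0 i0).trans hAAT
      have e3 : |(Matrix.diagonal R - A * Aᵀ) i0 i0| ≤ σ := by
        refine (entry_le_specNorm _ i0 i0).trans ?_
        rw [hσdef, sigmaSq]
        exact le_max_left _ _
      have : R i0 - N2 ≤ (Matrix.diagonal R - A * Aᵀ) i0 i0 := by
        rw [e1]
        have := (le_abs_self _).trans e2
        linarith
      exact this.trans ((le_abs_self _).trans e3)
    have hcol : C j0 - N2 ≤ σ := by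
      have e1 : (Matrix.diagonal C - Aᵀ * A) j0 j0 = C j0 - (Aᵀ * A) j0 j0 := by
        simp [Matrix.sub_apply, Matrix.diagonal_apply_eq]
      have e2 : |(Aᵀ * A) j0 j0| ≤ N2 :=
        (entry_le_specNorm (Aᵀ * A) j0 j0).trans hATA
      have e3 : |(Matrix.diagonal C - Aᵀ * A) j0 j0| ≤ σ := by
        refine (entry_le_specNorm _ j0 j0).trans ?_
        rw [hσdef, sigmaSq]
        exact le_max_right _ _
      have : C j0 - N2 ≤ (Matrix.diagonal C - Aᵀ * A) j0 j0 := by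
        rw [e1]
        have := (le_abs_self _).trans e2
        linarith
      exact this.trans ((le_abs_self _).trans e3)
    rcases max_cases (R i0) (C j0) with ⟨h, _⟩ | ⟨h, _⟩ <;> rw [hT, h]
    · exact hrow
    · exact hcol
  -- put everything together
  have habs : |σ - T| ≤ N2 := abs_sub_le_iff.mpr ⟨by linarith, by linarith⟩
  calc |σ / T - 1| = |σ - T| / T := by
        rw [div_sub_one hTpos.ne', abs_div, abs_of_pos hTpos]
    _ ≤ N2 / T := (div_le_div_iff_of_pos_right hTpos).mpr habs
    _ ≤ N2 / S := div_le_div_of_nonneg_left (sq_nonneg _) hS0 hST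
end

section
/- Let A be a nonzero m×n real matrix and p any sampling distribution on the entries of A. Then |R(p)/R̃(p) − 1| ≤ ‖A‖₂ / ‖A‖₁. -/
open Matrix

lemma specNorm_sub_eq {m n : ℕ} (A B : Matrix (Fin m) (Fin n) ℝ) :
    specNorm (A - B) =
      ‖(Matrix.toEuclideanLin A).toContinuousLinearMap -
        (Matrix.toEuclideanLin B).toContinuousLinearMap‖ := by
  unfold specNorm
  rw [map_sub, map_sub]

lemma abs_coord_le_norm {n : ℕ} (x : EuclideanSpace ℝ (Fin n)) (j : Fin n) :
    |x j| ≤ ‖x‖ := by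
  have h := abs_real_inner_le_norm (EuclideanSpace.single j (1:ℝ)) x
  rw [EuclideanSpace.inner_single_left, EuclideanSpace.norm_single] at h
  simpa using h

lemma specNorm_stdBasisMatrix {m n : ℕ} (hm : 0 < m) (i : Fin m) (j : Fin n) (c : ℝ) :
    specNorm (Matrix.single i j c) = |c| := by
  have hL : ∀ x : EuclideanSpace ℝ (Fin n),
      (Matrix.toEuclideanLin (Matrix.single i j c)).toContinuousLinearMap x
        = EuclideanSpace.single i (c * x j) := by
    intro x
    show Matrix.toEuclideanLin (Matrix.single i j c) x = _
    rw [Matrix.toEuclideanLin_apply, Matrix.single_mulVec]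
    rfl
  apply le_antisymm
  · apply ContinuousLinearMap.opNorm_le_bound _ (abs_nonneg c)
    intro x
    rw [hL, EuclideanSpace.norm_single]
    rw [Real.norm_eq_abs, abs_mul]
    exact mul_le_mul_of_nonneg_left (abs_coord_le_norm x j) (abs_nonneg c)
  · have h := ContinuousLinearMap.le_opNorm
      (Matrix.toEuclideanLin (Matrix.single i j c)).toContinuousLinearMap
      (EuclideanSpace.single j (1:ℝ))
    rw [hL, EuclideanSpace.norm_single, EuclideanSpace.norm_single] at h
    unfold specNorm
    simpa using h

/-- `R̃(p) = max_{i,j} |A i j| / p i j`. -/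
noncomputable def RTilde {m n : ℕ} (A : Matrix (Fin m) (Fin n) ℝ)
    (p : Fin m → Fin n → ℝ) : ℝ :=
  ⨆ i, ⨆ j, |A i j| / p i j

/-- `R(p)`: the maximum over pairs `(i,j)` with `p i j > 0` of `‖A − B^(i,j)‖₂`, where
`B^(i,j)` has `(i,j)` entry `A i j / p i j` and all other entries `0`. -/
noncomputable def Rp {m n : ℕ} (A : Matrix (Fin m) (Fin n) ℝ)
    (p : Fin m → Fin n → ℝ) : ℝ :=
  sSup {x : ℝ | ∃ i j, 0 < p i j ∧
    x = specNorm (A - Matrix.single i j (A i j / p i j))}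

/-- For a nonzero matrix `A` and any sampling distribution `p`,
`|R(p)/R̃(p) − 1| ≤ ‖A‖₂ / ‖A‖₁`. -/
theorem stmt4 (m n : ℕ) (hm : 0 < m) (hn : 0 < n)
    (A : Matrix (Fin m) (Fin n) ℝ) (hA : A ≠ 0) (p : Fin m → Fin n → ℝ)
    (hp0 : ∀ i j, 0 ≤ p i j) (hpsum : ∑ i, ∑ j, p i j = 1)
    (hppos : ∀ i j, A i j ≠ 0 → 0 < p i j) :
    |Rp A p / RTilde A p - 1| ≤ specNorm A / ∑ i, ∑ j, |A i j| := by
  haveI : Nonempty (Fin m) := ⟨⟨0, hm⟩⟩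
  haveI : Nonempty (Fin n) := ⟨⟨0, hn⟩⟩
  set s := specNorm A with hs
  have hs0 : 0 ≤ s := norm_nonneg _
  obtain ⟨i1, j1, hA1⟩ : ∃ i j, A i j ≠ 0 := by
    by_contra h
    push_neg at h
    exact hA (by ext i j; simp [h])
  have hp1 : 0 < p i1 j1 := hppos _ _ hA1
  set f : Fin m → Fin n → ℝ := fun i j => |A i j| / p i j with hf
  have hbdd : ∀ i, BddAbove (Set.range (f i)) :=
    fun i => Set.Finite.bddAbove (Set.finite_range _)
  have hbdd2 : BddAbove (Set.range fun i => ⨆ j, f i j) :=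
    Set.Finite.bddAbove (Set.finite_range _)
  have hTdef : RTilde A p = ⨆ i, ⨆ j, f i j := rfl
  have hTle : ∀ i j, f i j ≤ RTilde A p := fun i j => by
    rw [hTdef]
    exact le_trans (le_ciSup (hbdd i) j) (le_ciSup hbdd2 i)
  obtain ⟨q0, hq0⟩ := Finite.exists_max (fun q : Fin m × Fin n => f q.1 q.2)
  have hTeq : RTilde A p = f q0.1 q0.2 := by
    refine le_antisymm ?_ (hTle _ _)
    rw [hTdef]
    exact ciSup_le fun i => ciSup_le fun j => hq0 (i, j)
  have hT1 : 0 < f i1 j1 := div_pos (abs_pos.mpr hA1) hp1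
  have hTpos : 0 < RTilde A p := lt_of_lt_of_le hT1 (hTle i1 j1)
  have hq0p : 0 < p q0.1 q0.2 := by
    rcases lt_or_eq_of_le (hp0 q0.1 q0.2) with h | h
    · exact h
    · exfalso
      have hA0 : A q0.1 q0.2 = 0 := by
        by_contra hne
        exact absurd (hppos _ _ hne) (by rw [← h]; exact lt_irrefl _)
      have : f q0.1 q0.2 = 0 := by simp [hf, hA0]
      rw [hTeq, this] at hTpos
      exact lt_irrefl _ hTpos
  have hN : ∑ i, ∑ j, |A i j| ≤ RTilde A p := by
    calc ∑ i, ∑ j, |A i j| = ∑ i, ∑ j, p i j * f i j := by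
          refine Finset.sum_congr rfl fun i _ => Finset.sum_congr rfl fun j _ => ?_
          rcases eq_or_lt_of_le (hp0 i j) with h | h
          · have hA0 : A i j = 0 := by
              by_contra hne
              exact absurd (hppos _ _ hne) (by rw [← h]; exact lt_irrefl _)
            simp [hf, hA0]
          · rw [hf]; field_simp [h.ne']
      _ ≤ ∑ i, ∑ j, p i j * RTilde A p := by
          refine Finset.sum_le_sum fun i _ => Finset.sum_le_sum fun j _ => ?_
          exact mul_le_mul_of_nonneg_left (hTle i j) (hp0 i j)
      _ = RTilde A p := by
          simp_rw [← Finset.sum_mul]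
          rw [hpsum, one_mul]
  set S := {x : ℝ | ∃ i j, 0 < p i j ∧
    x = specNorm (A - Matrix.single i j (A i j / p i j))} with hS
  have hRp : Rp A p = sSup S := rfl
  have hSsub : S ⊆ (fun q : Fin m × Fin n =>
      specNorm (A - Matrix.single q.1 q.2 (A q.1 q.2 / p q.1 q.2))) '' Set.univ := by
    rintro x ⟨i, j, hpij, rfl⟩
    exact ⟨(i, j), trivial, rfl⟩
  have hSfin : S.Finite := Set.Finite.subset (Set.finite_univ.image _) hSsub
  have hSbdd : BddAbove S := hSfin.bddAbove
  have hSne : S.Nonempty := ⟨_, i1, j1, hp1, rfl⟩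
  have hBnorm : ∀ i j, 0 < p i j →
      specNorm (Matrix.single i j (A i j / p i j)) = f i j := by
    intro i j hpij
    rw [specNorm_stdBasisMatrix hm, abs_div, abs_of_pos hpij]
  have hRle : Rp A p ≤ s + RTilde A p := by
    rw [hRp]
    refine csSup_le hSne ?_
    rintro x ⟨i, j, hpij, rfl⟩
    rw [specNorm_sub_eq]
    calc ‖(Matrix.toEuclideanLin A).toContinuousLinearMap -
          (Matrix.toEuclideanLin (Matrix.single i j (A i j / p i j))).toContinuousLinearMap‖
        ≤ ‖(Matrix.toEuclideanLin A).toContinuousLinearMap‖ +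
          ‖(Matrix.toEuclideanLin (Matrix.single i j (A i j / p i j))).toContinuousLinearMap‖ :=
          norm_sub_le _ _
      _ = s + specNorm (Matrix.single i j (A i j / p i j)) := rfl
      _ = s + f i j := by rw [hBnorm i j hpij]
      _ ≤ s + RTilde A p := by linarith [hTle i j]
  have hlow : RTilde A p - s ≤ Rp A p := by
    have hmem : specNorm (A - Matrix.single q0.1 q0.2 (A q0.1 q0.2 / p q0.1 q0.2)) ∈ S :=
      ⟨q0.1, q0.2, hq0p, rfl⟩
    have h1 : RTilde A p - s ≤
        specNorm (A - Matrix.single q0.1 q0.2 (A q0.1 q0.2 / p q0.1 q0.2)) := by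
      rw [hTeq, ← hBnorm q0.1 q0.2 hq0p, specNorm_sub_eq]
      rw [norm_sub_rev]
      exact norm_sub_norm_le _ _
    rw [hRp]
    exact le_trans h1 (le_csSup hSbdd hmem)
  have habs : |Rp A p - RTilde A p| ≤ s := abs_le.mpr ⟨by linarith, by linarith⟩
  have hNpos : 0 < ∑ i, ∑ j, |A i j| :=
    Finset.sum_pos' (fun i _ => Finset.sum_nonneg fun j _ => abs_nonneg _)
      ⟨i1, Finset.mem_univ _,
        Finset.sum_pos' (fun j _ => abs_nonneg _)
          ⟨j1, Finset.mem_univ _, abs_pos.mpr hA1⟩⟩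
  have key : |Rp A p / RTilde A p - 1| = |Rp A p - RTilde A p| / RTilde A p := by
    rw [div_sub_one (ne_of_gt hTpos), abs_div, abs_of_pos hTpos]
  rw [key]
  exact div_le_div₀ hs0 habs hNpos hN
end

section
/- For any real numbers c > 0 and d > 0, the equation x² − c·x − d = 0 has exactly one positive real solution r and one negative real solution, and this positive solution satisfies (c + √d)/√2 ≤ r ≤ c + √d. -/
lemma stmt6_aux (c u t : ℝ) (hc : 0 < c) (hu : 0 ≤ u) (ht2 : t ^ 2 = 2)
    (ht : (1.25 : ℝ) ≤ t) :
    (c + u) ^ 2 / 2 - c * (c + u) * t / 2 - u ^ 2 ≤ 0 := by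
  nlinarith [sq_nonneg (2 * (t - 1) * c - (2 - t) * u)]

/-- For `c, d > 0`, the equation `x² − c·x − d = 0` has exactly one positive and exactly one
negative real solution, and the positive solution `r` satisfies
`(c + √d)/√2 ≤ r ≤ c + √d`. -/
theorem stmt6 (c d : ℝ) (hc : 0 < c) (hd : 0 < d) :
    (∃! r : ℝ, 0 < r ∧ r ^ 2 - c * r - d = 0) ∧
    (∃! r : ℝ, r < 0 ∧ r ^ 2 - c * r - d = 0) ∧
    (∀ r : ℝ, 0 < r → r ^ 2 - c * r - d = 0 →
      (c + Real.sqrt d) / Real.sqrt 2 ≤ r ∧ r ≤ c + Real.sqrt d) := by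
  set s := Real.sqrt (c ^ 2 + 4 * d) with hs
  have hs2 : s ^ 2 = c ^ 2 + 4 * d := Real.sq_sqrt (by positivity)
  have hs0 : 0 ≤ s := Real.sqrt_nonneg _
  have hsc : c < s := by nlinarith
  have hsd : Real.sqrt d ^ 2 = d := Real.sq_sqrt hd.le
  have hsd0 : 0 ≤ Real.sqrt d := Real.sqrt_nonneg d
  have h2 : Real.sqrt 2 ^ 2 = 2 := Real.sq_sqrt (by norm_num)
  have h20 : (1.25 : ℝ) ≤ Real.sqrt 2 := by
    nlinarith [Real.sqrt_nonneg 2]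
  clear_value s
  have key : ∀ r : ℝ, r ^ 2 - c * r - d = 0 → r = (c + s) / 2 ∨ r = (c - s) / 2 := by
    intro r hr
    have h : (r - (c + s) / 2) * (r - (c - s) / 2) = 0 := by nlinarith
    rcases mul_eq_zero.1 h with h | h
    · left; linarith
    · right; linarith
  have hr0pos : 0 < (c + s) / 2 := by linarith
  have hr1neg : (c - s) / 2 < 0 := by linarith
  have hroot0 : ((c + s) / 2) ^ 2 - c * ((c + s) / 2) - d = 0 := by nlinarith
  have hroot1 : ((c - s) / 2) ^ 2 - c * ((c - s) / 2) - d = 0 := by nlinarith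
  refine ⟨⟨(c + s) / 2, ⟨hr0pos, hroot0⟩, ?_⟩, ⟨(c - s) / 2, ⟨hr1neg, hroot1⟩, ?_⟩, ?_⟩
  · rintro r ⟨hrp, hr⟩
    rcases key r hr with h | h
    · exact h
    · linarith
  · rintro r ⟨hrn, hr⟩
    rcases key r hr with h | h
    · linarith
    · exact h
  · intro r hrp hr
    have hrc : c < r := by nlinarith
    set t := Real.sqrt 2 with ht
    set u := Real.sqrt d with hu
    have ht0 : (0:ℝ) < t := by positivity
    clear_value t u
    have hLle : ((c + u) / t) ^ 2 - c * ((c + u) / t) - d ≤ 0 := by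
      have h1 : ((c + u) / t) ^ 2 = (c + u) ^ 2 / 2 := by
        rw [div_pow, h2]
      have h3 : c * ((c + u) / t) = c * (c + u) * t / 2 := by
        have ht0 : t ≠ 0 := by positivity
        field_simp
        linear_combination (-1 : ℝ) * h2
      rw [h1, h3, ← hsd]
      exact stmt6_aux c u t hc hsd0 h2 h20
    have hLpos : 0 < (c + u) / t := by positivity
    constructor
    · obtain ⟨L, hLdef⟩ : ∃ L : ℝ, L = (c + u) / t := ⟨_, rfl⟩
      rw [← hLdef] at hLle hLpos ⊢
      by_contra hcon
      push_neg at hcon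
      have hneg : (r - L) * (r + L - c) < 0 :=
        mul_neg_of_neg_of_pos (by linarith) (by linarith)
      nlinarith
    · have hfu : (r - (c + u)) * (r + (c + u) - c) = -(c * u) := by
        linear_combination hr - hsd
      by_contra hcon
      push_neg at hcon
      have hpos : 0 < (r - (c + u)) * (r + (c + u) - c) :=
        mul_pos (by linarith) (by linarith)
      have hcu : 0 ≤ c * u := mul_nonneg hc.le hsd0
      linarith
end

section
/- Let A be an m×n real matrix and p a sampling distribution on its entries with σ(p) > 0 and R(p) > 0. Then the quantity ε₁(p) = inf{ ε > 0 : (m+n)·exp(−sε²/(σ(p)² + R(p)·ε/3)) ≤ δ } satisfies ε₂(p)/√2 ≤ ε₁(p) ≤ ε₂(p), where ε₂(p) = α·σ(p) + β·R(p). -/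
open Matrix

/-- `α = √(log((m+n)/δ)/s)`. -/
noncomputable def alphaC (m n s : ℕ) (δ : ℝ) : ℝ :=
  Real.sqrt (Real.log ((m + n : ℝ) / δ) / s)

/-- `β = log((m+n)/δ)/(3s)`. -/
noncomputable def betaC (m n s : ℕ) (δ : ℝ) : ℝ :=
  Real.log ((m + n : ℝ) / δ) / (3 * s)

/-- `ε₁(p) = inf{ ε > 0 : (m+n)·exp(−sε²/(σ(p)² + R(p)·ε/3)) ≤ δ }`. -/
noncomputable def eps1 {m n : ℕ} (s : ℕ) (δ : ℝ) (A : Matrix (Fin m) (Fin n) ℝ)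
    (p : Fin m → Fin n → ℝ) : ℝ :=
  sInf {ε : ℝ | 0 < ε ∧
    (m + n : ℝ) * Real.exp (-(s * ε ^ 2) / (sigmaSq A p + Rp A p * ε / 3)) ≤ δ}

set_option maxHeartbeats 1000000 in
/-- For a sampling distribution `p` with `σ(p) > 0` and `R(p) > 0`,
`ε₂(p)/√2 ≤ ε₁(p) ≤ ε₂(p)` where `ε₂(p) = α·σ(p) + β·R(p)`. -/
theorem stmt7 (m n : ℕ) (hm : 0 < m) (hn : 0 < n)
    (A : Matrix (Fin m) (Fin n) ℝ)
    (s : ℕ) (hs : 1 ≤ s) (δ : ℝ) (hδ : δ ∈ Set.Ioo (0 : ℝ) 1)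
    (p : Fin m → Fin n → ℝ)
    (hp0 : ∀ i j, 0 ≤ p i j) (hpsum : ∑ i, ∑ j, p i j = 1)
    (hppos : ∀ i j, A i j ≠ 0 → 0 < p i j)
    (hσ : 0 < sigmaSq A p) (hR : 0 < Rp A p) :
    (alphaC m n s δ * Real.sqrt (sigmaSq A p) + betaC m n s δ * Rp A p) / Real.sqrt 2
        ≤ eps1 s δ A p ∧
      eps1 s δ A p ≤ alphaC m n s δ * Real.sqrt (sigmaSq A p) + betaC m n s δ * Rp A p := by
  obtain ⟨hδ0, hδ1⟩ := hδ
  have hm1 : (1:ℝ) ≤ m := by exact_mod_cast hm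
  have hn1 : (1:ℝ) ≤ n := by exact_mod_cast hn
  have hmn0 : (0:ℝ) < (m:ℝ) + n := by linarith
  unfold eps1 alphaC betaC
  set σ2 := sigmaSq A p with hσ2def
  set R := Rp A p with hRdef
  set L := Real.log ((m + n : ℝ) / δ) with hLdef
  set s' := (s:ℝ) with hs'def
  have hs1 : (1:ℝ) ≤ s' := by rw [hs'def]; exact_mod_cast hs
  have hs0 : (0:ℝ) < s' := by linarith
  have hL : 0 < L := Real.log_pos (by rw [lt_div_iff₀ hδ0]; nlinarith)
  set b := L * R / 3 with hbdef
  set c := L * σ2 with hcdef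
  have hb : 0 < b := by rw [hbdef]; positivity
  have hc : 0 < c := mul_pos hL hσ
  set t := Real.sqrt (b ^ 2 + 4 * s' * c) with htdef
  have ht2 : t ^ 2 = b ^ 2 + 4 * s' * c := Real.sq_sqrt (by positivity)
  have ht0 : 0 ≤ t := Real.sqrt_nonneg _
  have htb : b < t := by nlinarith
  set x := (b + t) / (2 * s') with hxdef
  have hx0 : 0 < x := by rw [hxdef]; positivity
  have hroot : s' * x ^ 2 = b * x + c := by
    rw [hxdef]
    field_simp
    nlinarith [ht2]
  have hsx : b < s' * x := by
    have h1 : s' * x = (b + t) / 2 := by rw [hxdef]; field_simp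
    rw [h1]; linarith
  have halg : ∀ ε : ℝ, 0 < ε → (c + b * ε ≤ s' * ε ^ 2 ↔ x ≤ ε) := by
    intro ε hε
    constructor
    · intro h
      by_contra hlt
      push_neg at hlt
      have hf : 0 < s' * x + s' * ε - b := by linarith [mul_pos hs0 hε]
      nlinarith [mul_pos (sub_pos.2 hlt) hf]
    · intro h
      have hf : 0 ≤ s' * ε + s' * x - b := by linarith [mul_pos hs0 hε]
      nlinarith [mul_nonneg (sub_nonneg.2 h) hf]
  have hexp_iff : ∀ ε : ℝ, 0 < ε →
      (((m:ℝ) + n) * Real.exp (-(s' * ε ^ 2) / (σ2 + R * ε / 3)) ≤ δ ↔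
        c + b * ε ≤ s' * ε ^ 2) := by
    intro ε hε
    have hD : 0 < σ2 + R * ε / 3 := by nlinarith [mul_pos hR hε]
    rw [← le_div_iff₀' hmn0, ← Real.le_log_iff_exp_le (div_pos hδ0 hmn0),
      Real.log_div hδ0.ne' hmn0.ne']
    have hLeq : Real.log δ - Real.log ((m:ℝ) + n) = -L := by
      rw [hLdef, Real.log_div hmn0.ne' hδ0.ne']; ring
    rw [hLeq, div_le_iff₀ hD, hcdef, hbdef]
    constructor <;> intro h <;> nlinarith
  have hSet : {ε : ℝ | 0 < ε ∧
      ((m:ℝ) + n) * Real.exp (-(s' * ε ^ 2) / (σ2 + R * ε / 3)) ≤ δ} = Set.Ici x := by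
    ext ε
    simp only [Set.mem_setOf_eq, Set.mem_Ici]
    constructor
    · rintro ⟨hε, hle⟩
      exact (halg ε hε).1 ((hexp_iff ε hε).1 hle)
    · intro hxε
      have hε := lt_of_lt_of_le hx0 hxε
      exact ⟨hε, (hexp_iff ε hε).2 ((halg ε hε).2 hxε)⟩
  rw [hSet, csInf_Ici]
  set E := Real.sqrt (L / s') * Real.sqrt σ2 with hEdef
  set B := L / (3 * s') * R with hBdef
  have hE0 : 0 ≤ E := by rw [hEdef]; positivity
  have hB0 : 0 < B := by rw [hBdef]; positivity
  have hE2 : s' * E ^ 2 = c := by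
    rw [hEdef, mul_pow, Real.sq_sqrt (by positivity : (0:ℝ) ≤ L / s'),
      Real.sq_sqrt hσ.le, hcdef]
    field_simp
  have hBb : s' * B = b := by rw [hBdef, hbdef]; field_simp
  constructor
  · -- lower bound
    have hxB : B < x := by
      have h := hsx
      rw [← hBb] at h
      exact lt_of_mul_lt_mul_left h hs0.le
    have h2x : (E + B) ^ 2 ≤ 2 * x ^ 2 := by
      nlinarith [sq_nonneg (E - B), mul_pos hs0 (mul_pos hB0 (sub_pos.2 hxB)),
        hroot, hE2, hBb]
    have h2 : Real.sqrt 2 ^ 2 = 2 := Real.sq_sqrt (by norm_num)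
    have h2p : 0 < Real.sqrt 2 := Real.sqrt_pos.2 (by norm_num)
    rw [div_le_iff₀ h2p]
    nlinarith [mul_pos hx0 h2p]
  · -- upper bound
    refine (halg (E + B) (by linarith)).1 ?_
    nlinarith [mul_nonneg hb.le hE0, hE2, hBb]
end

section
/- Let A be an m×n real matrix all of whose rows are nonzero. Let ρ be a distribution over the rows with ρ_i > 0 and ∑_i ρ_i = 1, and for each row i let q i be a distribution over the columns with ∑_j q i j = 1, q i j ≥ 0, and q i j > 0 whenever A i j ≠ 0. Set p i j = ρ_i · q i j. Then ε₅(p) ≥ max_i [ α·‖A_(i)‖₁/√ρ_i + β·‖A_(i)‖₁/ρ_i ], and equality holds when q i j = |A i j|/‖A_(i)‖₁ for all (i,j). -/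
open Matrix

/-- `ε₅(p) = max_i [ α·√(∑_j (A i j)²/p i j) + β·max_j |A i j|/p i j ]`. -/
noncomputable def eps5 {m n : ℕ} (α β : ℝ) (A : Matrix (Fin m) (Fin n) ℝ)
    (p : Fin m → Fin n → ℝ) : ℝ :=
  ⨆ i, (α * Real.sqrt (∑ j, A i j ^ 2 / p i j) + β * ⨆ j, |A i j| / p i j)

/-- Cauchy–Schwarz step. -/
lemma cs_step {n : ℕ} (a q : Fin n → ℝ) (hq0 : ∀ j, 0 ≤ q j)
    (hqsum : ∑ j, q j = 1) (hqpos : ∀ j, a j ≠ 0 → 0 < q j) :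
    (∑ j, |a j|) ^ 2 ≤ ∑ j, a j ^ 2 / q j := by
  have h := Finset.sum_mul_sq_le_sq_mul_sq Finset.univ
    (fun j => Real.sqrt (q j)) (fun j => |a j| / Real.sqrt (q j))
  have h1 : ∀ j, Real.sqrt (q j) * (|a j| / Real.sqrt (q j)) = |a j| := by
    intro j
    rcases eq_or_ne (q j) 0 with h0 | h0
    · have : a j = 0 := by
        by_contra hne; exact (hqpos j hne).ne' h0
      simp [h0, this]
    · have : Real.sqrt (q j) ≠ 0 := by
        simpa [Real.sqrt_eq_zero (hq0 j)] using h0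
      field_simp
  have h2 : ∀ j, Real.sqrt (q j) ^ 2 = q j := fun j => Real.sq_sqrt (hq0 j)
  have h3 : ∀ j, (|a j| / Real.sqrt (q j)) ^ 2 = a j ^ 2 / q j := by
    intro j
    rw [div_pow, sq_abs, Real.sq_sqrt (hq0 j)]
  simp only [h1, h2, h3] at h
  simpa [hqsum] using h

/-- There is a column where `|a j| ≥ S·q j` with `q j > 0`. -/
lemma exists_good_col {n : ℕ} (a q : Fin n → ℝ) (hq0 : ∀ j, 0 ≤ q j)
    (hqsum : ∑ j, q j = 1) (hqpos : ∀ j, a j ≠ 0 → 0 < q j)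
    (hne : ∃ j, a j ≠ 0) :
    ∃ j, 0 < q j ∧ (∑ j', |a j'|) * q j ≤ |a j| := by
  set S := ∑ j', |a j'| with hSdef
  have hS0 : 0 ≤ S := Finset.sum_nonneg fun j _ => abs_nonneg _
  set T : Finset (Fin n) := Finset.univ.filter (fun j => a j ≠ 0) with hT
  obtain ⟨j₁, hj₁⟩ := hne
  have hTne : T.Nonempty := ⟨j₁, by simp [hT, hj₁]⟩
  have hsumT : ∑ j ∈ T, |a j| = S := by
    rw [hSdef, hT]
    exact Finset.sum_filter_of_ne (fun x _ hx => fun h0 => hx (by simp [h0]))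
  by_contra hcon
  push_neg at hcon
  have hlt : ∀ j ∈ T, |a j| < S * q j := by
    intro j hj
    have hj' : a j ≠ 0 := by simpa [hT] using hj
    have hpos := hqpos j hj'
    exact hcon j hpos
  have h1 : S < ∑ j ∈ T, S * q j := by
    calc S = ∑ j ∈ T, |a j| := hsumT.symm
    _ < ∑ j ∈ T, S * q j := Finset.sum_lt_sum_of_nonempty hTne hlt
  have h2 : ∑ j ∈ T, S * q j ≤ S := by
    rw [← Finset.mul_sum]
    have : ∑ j ∈ T, q j ≤ 1 := by
      rw [← hqsum]
      exact Finset.sum_le_sum_of_subset_of_nonneg (Finset.subset_univ T)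
        (fun j _ _ => hq0 j)
    nlinarith
  linarith

/-- For `p i j = ρ_i · q i j` with `ρ` a positive row distribution and `q i` a distribution on
each row, `ε₅(p) ≥ max_i [ α·‖A_(i)‖₁/√ρ_i + β·‖A_(i)‖₁/ρ_i ]`, and equality holds when
`q i j = |A i j|/‖A_(i)‖₁`. -/
theorem stmt9 (m n : ℕ) (hm : 0 < m) (hn : 0 < n)
    (A : Matrix (Fin m) (Fin n) ℝ) (hrows : ∀ i, ∃ j, A i j ≠ 0)
    (s : ℕ) (hs : 1 ≤ s) (δ : ℝ) (hδ : δ ∈ Set.Ioo (0 : ℝ) 1)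
    (ρ : Fin m → ℝ) (hρ : ∀ i, 0 < ρ i) (hρsum : ∑ i, ρ i = 1)
    (q : Fin m → Fin n → ℝ) (hq0 : ∀ i j, 0 ≤ q i j)
    (hqsum : ∀ i, ∑ j, q i j = 1) (hqpos : ∀ i j, A i j ≠ 0 → 0 < q i j) :
    (⨆ i, (alphaC m n s δ * (∑ j, |A i j|) / Real.sqrt (ρ i) +
        betaC m n s δ * (∑ j, |A i j|) / ρ i))
      ≤ eps5 (alphaC m n s δ) (betaC m n s δ) A (fun i j => ρ i * q i j) ∧
    ((∀ i j, q i j = |A i j| / ∑ j', |A i j'|) →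
      eps5 (alphaC m n s δ) (betaC m n s δ) A (fun i j => ρ i * q i j) =
        ⨆ i, (alphaC m n s δ * (∑ j, |A i j|) / Real.sqrt (ρ i) +
          betaC m n s δ * (∑ j, |A i j|) / ρ i)) := by
  haveI : Nonempty (Fin m) := Fin.pos_iff_nonempty.mp hm
  haveI : Nonempty (Fin n) := Fin.pos_iff_nonempty.mp hn
  set α := alphaC m n s δ with hαdef
  set β := betaC m n s δ with hβdef
  have hα0 : 0 ≤ α := Real.sqrt_nonneg _
  have hβ0 : 0 ≤ β := by
    apply div_nonneg _ (by positivity)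
    apply Real.log_nonneg
    rw [le_div_iff₀ hδ.1]
    have h1 : (1:ℝ) ≤ (m:ℝ) + n := by
      have h2 : (1:ℝ) ≤ (m:ℝ) := by exact_mod_cast hm
      have h3 : (0:ℝ) ≤ (n:ℝ) := Nat.cast_nonneg n
      linarith
    nlinarith [hδ.2.le]
  have hS : ∀ i, 0 < ∑ j, |A i j| := fun i => by
    obtain ⟨j, hj⟩ := hrows i
    exact Finset.sum_pos' (fun j _ => abs_nonneg _) ⟨j, Finset.mem_univ j, abs_pos.2 hj⟩
  have hsum : ∀ i, ∑ j, A i j ^ 2 / (ρ i * q i j) = (∑ j, A i j ^ 2 / q i j) / ρ i := by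
    intro i
    rw [Finset.sum_div]
    exact Finset.sum_congr rfl fun j _ => by rw [div_mul_eq_div_div_swap]
  have hsqrt : ∀ i, (∑ j, |A i j|) / Real.sqrt (ρ i) ≤
      Real.sqrt (∑ j, A i j ^ 2 / (ρ i * q i j)) := by
    intro i
    rw [hsum i]
    have hcs := cs_step (A i) (q i) (hq0 i) (hqsum i) (hqpos i)
    calc (∑ j, |A i j|) / Real.sqrt (ρ i)
        = Real.sqrt ((∑ j, |A i j|) ^ 2 / ρ i) := by
          rw [Real.sqrt_div (by positivity), Real.sqrt_sq (hS i).le]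
      _ ≤ _ := by
          apply Real.sqrt_le_sqrt
          gcongr
          exact (hρ i).le
  have hsupB : ∀ i, (∑ j, |A i j|) / ρ i ≤ ⨆ j, |A i j| / (ρ i * q i j) := by
    intro i
    obtain ⟨j₀, hq₀, hle⟩ := exists_good_col (A i) (q i) (hq0 i) (hqsum i) (hqpos i) (hrows i)
    have hstep : (∑ j, |A i j|) / ρ i ≤ |A i j₀| / (ρ i * q i j₀) := by
      rw [div_mul_eq_div_div_swap]
      gcongr
      · exact (hρ i).le
      · rw [le_div_iff₀ hq₀]; exact hle
    exact hstep.trans (le_ciSup (f := fun j => |A i j| / (ρ i * q i j)) (Set.finite_range _).bddAbove j₀)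
  constructor
  · apply ciSup_mono (Set.finite_range _).bddAbove
    intro i
    rw [mul_div_assoc, mul_div_assoc]
    exact add_le_add (mul_le_mul_of_nonneg_left (hsqrt i) hα0)
      (mul_le_mul_of_nonneg_left (hsupB i) hβ0)
  · intro hq
    apply iSup_congr
    intro i
    have hSi := hS i
    have hSne : (∑ j', |A i j'|) ≠ 0 := hSi.ne'
    have hρne : ρ i ≠ 0 := (hρ i).ne'
    have hterm : ∀ j, A i j ^ 2 / (ρ i * q i j) = |A i j| * (∑ j', |A i j'|) / ρ i := by
      intro j
      rw [hq i j]
      rcases eq_or_ne (A i j) 0 with h | h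
      · simp [h]
      · have hAa : |A i j| ≠ 0 := abs_ne_zero.2 h
        field_simp
        rw [← sq_abs (A i j)]
    have hsum2 : ∑ j, A i j ^ 2 / (ρ i * q i j) = (∑ j, |A i j|) ^ 2 / ρ i := by
      simp only [hterm]
      rw [← Finset.sum_div, ← Finset.sum_mul, sq]
    have hsqrt2 : Real.sqrt (∑ j, A i j ^ 2 / (ρ i * q i j)) =
        (∑ j, |A i j|) / Real.sqrt (ρ i) := by
      rw [hsum2, Real.sqrt_div (by positivity), Real.sqrt_sq hSi.le]
    have hval : ∀ j, A i j ≠ 0 → |A i j| / (ρ i * q i j) = (∑ j', |A i j'|) / ρ i := by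
      intro j h
      have hAa : |A i j| ≠ 0 := abs_ne_zero.2 h
      rw [hq i j]
      field_simp
    have hsup2 : (⨆ j, |A i j| / (ρ i * q i j)) = (∑ j, |A i j|) / ρ i := by
      apply le_antisymm
      · apply ciSup_le
        intro j
        rcases eq_or_ne (A i j) 0 with h | h
        · rw [h]; simp only [abs_zero, zero_div]
          exact div_nonneg (Finset.sum_nonneg fun _ _ => abs_nonneg _) (hρ i).le
        · rw [hval j h]
      · obtain ⟨j₀, hj₀⟩ := hrows i
        rw [← hval j₀ hj₀]
        exact le_ciSup (f := fun j => |A i j| / (ρ i * q i j)) (Set.finite_range _).bddAbove j₀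
    show α * Real.sqrt (∑ j, A i j ^ 2 / (ρ i * q i j)) +
        β * (⨆ j, |A i j| / (ρ i * q i j)) = _
    rw [hsqrt2, hsup2, mul_div_assoc, mul_div_assoc]
end

section
/- Let m ≥ 1, let z_1, …, z_m > 0, and let α > 0 and β > 0. Then the function ζ ↦ ∑_{i=1}^m ρ_i(ζ) is continuous and strictly decreasing on (0, ∞), and there is a unique ζ₁ > 0 such that ∑_{i=1}^m ρ_i(ζ₁) = 1. -/
/-- `ρ_i(ζ) = ( α z_i/(2ζ) + √( (α z_i/(2ζ))² + β z_i/ζ ) )²`. -/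
noncomputable def rhoFun (α β z ζ : ℝ) : ℝ :=
  (α * z / (2 * ζ) + Real.sqrt ((α * z / (2 * ζ)) ^ 2 + β * z / ζ)) ^ 2

lemma rho_nonneg (α β z ζ : ℝ) : 0 ≤ rhoFun α β z ζ := sq_nonneg _

lemma rho_anti {α β z : ℝ} (hα : 0 < α) (hβ : 0 < β) (hz : 0 < z)
    {a b : ℝ} (ha : 0 < a) (hab : a < b) : rhoFun α β z b < rhoFun α β z a := by
  have hb : 0 < b := ha.trans hab
  have hu : α * z / (2 * b) < α * z / (2 * a) :=
    div_lt_div_of_pos_left (by positivity) (by positivity) (by linarith)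
  have hub : 0 < α * z / (2 * b) := by positivity
  have hv : β * z / b < β * z / a :=
    div_lt_div_of_pos_left (by positivity) ha hab
  have hvb : 0 < β * z / b := by positivity
  have hs : Real.sqrt ((α * z / (2 * b)) ^ 2 + β * z / b)
      < Real.sqrt ((α * z / (2 * a)) ^ 2 + β * z / a) := by
    apply Real.sqrt_lt_sqrt (by positivity)
    have : (α * z / (2 * b)) ^ 2 < (α * z / (2 * a)) ^ 2 :=
      pow_lt_pow_left₀ hu hub.le (by norm_num)
    linarith
  unfold rhoFun
  apply pow_lt_pow_left₀ _ (by positivity) (by norm_num)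
  have := Real.sqrt_nonneg ((α * z / (2 * b)) ^ 2 + β * z / b)
  linarith

lemma rho_lower {α β z ζ : ℝ} (hα : 0 < α) (hβ : 0 < β) (hz : 0 < z) (hζ : 0 < ζ) :
    β * z / ζ ≤ rhoFun α β z ζ := by
  have hu : 0 ≤ α * z / (2 * ζ) := by positivity
  have hv : 0 ≤ (α * z / (2 * ζ)) ^ 2 + β * z / ζ := by positivity
  have hs := Real.sq_sqrt hv
  have hsn := Real.sqrt_nonneg ((α * z / (2 * ζ)) ^ 2 + β * z / ζ)
  unfold rhoFun
  nlinarith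

lemma rho_cont (α β z : ℝ) : ContinuousOn (fun ζ => rhoFun α β z ζ) (Set.Ioi 0) := by
  unfold rhoFun
  have hne : ∀ ζ ∈ Set.Ioi (0:ℝ), (2:ℝ) * ζ ≠ 0 := fun ζ hζ => by
    have : (0:ℝ) < ζ := hζ; positivity
  have hne' : ∀ ζ ∈ Set.Ioi (0:ℝ), ζ ≠ 0 := fun ζ hζ => ne_of_gt hζ
  have hd : ContinuousOn (fun ζ : ℝ => α * z / (2 * ζ)) (Set.Ioi 0) :=
    continuousOn_const.div (continuousOn_const.mul continuousOn_id) hne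
  have hd2 : ContinuousOn (fun ζ : ℝ => β * z / ζ) (Set.Ioi 0) :=
    continuousOn_const.div continuousOn_id hne'
  exact ((hd.add (((hd.pow 2).add hd2).sqrt)).pow 2)

lemma rho_tendsto (α β z : ℝ) :
    Filter.Tendsto (fun ζ => rhoFun α β z ζ) Filter.atTop (nhds 0) := by
  have hg : Filter.Tendsto (fun ζ : ℝ => 2 * ζ) Filter.atTop Filter.atTop :=
    (Filter.tendsto_id.const_mul_atTop two_pos)
  have h1 : Filter.Tendsto (fun ζ : ℝ => α * z / (2 * ζ)) Filter.atTop (nhds 0) :=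
    Filter.Tendsto.div_atTop tendsto_const_nhds hg
  have h2 : Filter.Tendsto (fun ζ : ℝ => β * z / ζ) Filter.atTop (nhds 0) :=
    Filter.Tendsto.div_atTop tendsto_const_nhds Filter.tendsto_id
  have h3 : Filter.Tendsto (fun ζ : ℝ => (α * z / (2 * ζ)) ^ 2 + β * z / ζ)
      Filter.atTop (nhds 0) := by
    have := (h1.pow 2).add h2
    simpa using this
  have h4 : Filter.Tendsto (fun ζ : ℝ =>
      Real.sqrt ((α * z / (2 * ζ)) ^ 2 + β * z / ζ)) Filter.atTop (nhds 0) := by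
    have := (Real.continuous_sqrt.tendsto 0).comp h3
    simpa [Function.comp_def] using this
  have := (h1.add h4).pow 2
  simpa [rhoFun] using this

/-- For `m ≥ 1`, positive `z_i` and `α, β > 0`, the function `ζ ↦ ∑_i ρ_i(ζ)` is continuous
and strictly decreasing on `(0, ∞)`, and there is a unique `ζ₁ > 0` with `∑_i ρ_i(ζ₁) = 1`. -/
theorem stmt11 (m : ℕ) (hm : 0 < m) (z : Fin m → ℝ) (hz : ∀ i, 0 < z i)
    (α β : ℝ) (hα : 0 < α) (hβ : 0 < β) :
    ContinuousOn (fun ζ => ∑ i, rhoFun α β (z i) ζ) (Set.Ioi 0) ∧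
    StrictAntiOn (fun ζ => ∑ i, rhoFun α β (z i) ζ) (Set.Ioi 0) ∧
    (∃! ζ₁ : ℝ, 0 < ζ₁ ∧ ∑ i, rhoFun α β (z i) ζ₁ = 1) := by
  set f : ℝ → ℝ := fun ζ => ∑ i, rhoFun α β (z i) ζ with hf
  have hcont : ContinuousOn f (Set.Ioi 0) := by
    apply continuousOn_finset_sum
    intro i _
    exact rho_cont α β (z i)
  have hanti : StrictAntiOn f (Set.Ioi 0) := by
    intro a ha b hb hab
    apply Finset.sum_lt_sum_of_nonempty (Finset.univ_nonempty_iff.2 ⟨⟨0, hm⟩⟩)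
    intro i _
    exact rho_anti hα hβ (hz i) ha hab
  refine ⟨hcont, hanti, ?_⟩
  -- the point a
  set i0 : Fin m := ⟨0, hm⟩
  set a : ℝ := β * z i0 with ha_def
  have ha : 0 < a := mul_pos hβ (hz i0)
  have hfa : 1 ≤ f a := by
    have h1 : rhoFun α β (z i0) a ≤ f a := by
      apply Finset.single_le_sum (fun i _ => rho_nonneg α β (z i) a) (Finset.mem_univ i0)
    have h2 : β * z i0 / a = 1 := div_self (ne_of_gt ha)
    have := rho_lower hα hβ (hz i0) ha (α := α)
    linarith [h2 ▸ this]
  -- the point b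
  have hten : Filter.Tendsto f Filter.atTop (nhds 0) := by
    have := tendsto_finset_sum Finset.univ
      (fun i _ => rho_tendsto α β (z i))
    simpa using this
  have hev : ∀ᶠ ζ in Filter.atTop, f ζ < 1 := hten.eventually_lt_const one_pos
  obtain ⟨b, hab, hfb⟩ := ((Filter.eventually_gt_atTop a).and hev).exists
  have hb : 0 < b := ha.trans hab
  have hsub : Set.Icc a b ⊆ Set.Ioi 0 := fun x hx => lt_of_lt_of_le ha hx.1
  have hivt := intermediate_value_Icc' hab.le (hcont.mono hsub)
  have h1mem : (1:ℝ) ∈ Set.Icc (f b) (f a) := ⟨hfb.le, hfa⟩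
  obtain ⟨ζ₁, hζmem, hζeq⟩ := hivt h1mem
  have hζpos : 0 < ζ₁ := lt_of_lt_of_le ha hζmem.1
  refine ⟨ζ₁, ⟨hζpos, hζeq⟩, ?_⟩
  rintro y ⟨hy, hyeq⟩
  exact hanti.injOn hy hζpos (hyeq.trans hζeq.symm)
end

section
/- Let A be an m×n real matrix all of whose rows are nonzero, and let p* be the algorithm's distribution. Then ε₅(p*) = ζ₁, and for every sampling distribution q on the entries of A, ε₅(p*) ≤ ε₅(q); that is, p* minimizes ε₅ and its minimum value is ζ₁. -/
open Matrix

/-- The algorithm's distribution: `p* i j = ρ_i(ζ₁) · |A i j| / ‖A_(i)‖₁`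
with `z_i = ‖A_(i)‖₁`. -/
noncomputable def pstar {m n : ℕ} (α β : ℝ) (A : Matrix (Fin m) (Fin n) ℝ)
    (ζ₁ : ℝ) : Fin m → Fin n → ℝ :=
  fun i j => rhoFun α β (∑ j', |A i j'|) ζ₁ * |A i j| / ∑ j', |A i j'|

lemma rho_pos {α β z ζ : ℝ} (hα : 0 < α) (hβ : 0 < β) (hz : 0 < z) (hζ : 0 < ζ) :
    0 < rhoFun α β z ζ := by
  unfold rhoFun; positivity

lemma rho_eq {α β z ζ : ℝ} (hα : 0 < α) (hβ : 0 < β) (hz : 0 < z) (hζ : 0 < ζ) :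
    α * z / Real.sqrt (rhoFun α β z ζ) + β * z / rhoFun α β z ζ = ζ := by
  set a := α * z / (2 * ζ) with ha
  set b := β * z / ζ with hb
  have hapos : 0 < a := by rw [ha]; positivity
  have hbpos : 0 < b := by rw [hb]; positivity
  have hsq : Real.sqrt (a ^ 2 + b) ^ 2 = a ^ 2 + b := Real.sq_sqrt (by positivity)
  have hr : 0 < a + Real.sqrt (a ^ 2 + b) := by positivity
  have hrho : rhoFun α β z ζ = (a + Real.sqrt (a ^ 2 + b)) ^ 2 := rfl
  rw [hrho, Real.sqrt_sq hr.le]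
  set r := a + Real.sqrt (a ^ 2 + b) with hrdef
  have key : ζ * r ^ 2 = α * z * r + β * z := by
    have h1 : r ^ 2 = 2 * a * r + b := by
      have : r ^ 2 = a ^ 2 + 2 * a * Real.sqrt (a ^ 2 + b) + Real.sqrt (a ^ 2 + b) ^ 2 := by
        rw [hrdef]; ring
      rw [this, hsq]; ring
    rw [h1, ha, hb]; field_simp
  have hr2 : (0:ℝ) < r ^ 2 := by positivity
  field_simp
  nlinarith [key]

lemma row_mono {α β z t ρ : ℝ} (hα : 0 < α) (hβ : 0 < β) (hz : 0 < z)
    (ht : 0 < t) (hle : t ≤ ρ) :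
    α * z / Real.sqrt ρ + β * z / ρ ≤ α * z / Real.sqrt t + β * z / t := by
  have h1 : Real.sqrt t ≤ Real.sqrt ρ := Real.sqrt_le_sqrt hle
  have h2 : 0 < Real.sqrt t := Real.sqrt_pos.mpr ht
  gcongr

lemma ciSup_eq_of {n : ℕ} (f : Fin n → ℝ) (c : ℝ)
    (hle : ∀ j, f j ≤ c) (hex : ∃ j, f j = c) : ⨆ j, f j = c := by
  obtain ⟨j, hj⟩ := hex
  have : Nonempty (Fin n) := ⟨j⟩
  refine le_antisymm (ciSup_le hle) ?_
  calc c = f j := hj.symm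
    _ ≤ ⨆ j, f j := le_ciSup (Set.Finite.bddAbove (Set.finite_range f)) j

/-- The algorithm's distribution `p*` satisfies `ε₅(p*) = ζ₁` and minimizes `ε₅` over all
sampling distributions on the entries of `A`. -/
theorem stmt12 (m n : ℕ) (hm : 0 < m) (hn : 0 < n)
    (A : Matrix (Fin m) (Fin n) ℝ) (hrows : ∀ i, ∃ j, A i j ≠ 0)
    (s : ℕ) (hs : 1 ≤ s) (δ : ℝ) (hδ : δ ∈ Set.Ioo (0 : ℝ) 1)
    (ζ₁ : ℝ) (hζ : 0 < ζ₁)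
    (hρsum : ∑ i, rhoFun (alphaC m n s δ) (betaC m n s δ) (∑ j, |A i j|) ζ₁ = 1) :
    eps5 (alphaC m n s δ) (betaC m n s δ) A
        (pstar (alphaC m n s δ) (betaC m n s δ) A ζ₁) = ζ₁ ∧
    ∀ q : Fin m → Fin n → ℝ, (∀ i j, 0 ≤ q i j) → (∑ i, ∑ j, q i j) = 1 →
      (∀ i j, A i j ≠ 0 → 0 < q i j) →
      eps5 (alphaC m n s δ) (betaC m n s δ) A
          (pstar (alphaC m n s δ) (betaC m n s δ) A ζ₁) ≤
        eps5 (alphaC m n s δ) (betaC m n s δ) A q := by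
  classical
  obtain ⟨hδ0, hδ1⟩ := hδ
  have hne_m : Nonempty (Fin m) := Fin.pos_iff_nonempty.mp hm
  have hne_n : Nonempty (Fin n) := Fin.pos_iff_nonempty.mp hn
  set α := alphaC m n s δ with hαdef
  set β := betaC m n s δ with hβdef
  have hK : 0 < Real.log ((m + n : ℝ) / δ) := by
    apply Real.log_pos
    have h1 : (1:ℝ) ≤ m := by exact_mod_cast hm
    have h2 : (1:ℝ) ≤ n := by exact_mod_cast hn
    rw [lt_div_iff₀ hδ0]
    linarith
  have hsR : (0:ℝ) < s := by exact_mod_cast hs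
  have hα : 0 < α := Real.sqrt_pos.mpr (div_pos hK hsR)
  have hβ : 0 < β := div_pos hK (by positivity)
  set z : Fin m → ℝ := fun i => ∑ j, |A i j| with hzdef
  have hz : ∀ i, 0 < z i := by
    intro i
    obtain ⟨j, hj⟩ := hrows i
    exact Finset.sum_pos' (fun j _ => abs_nonneg _) ⟨j, Finset.mem_univ j, abs_pos.mpr hj⟩
  set ρ : Fin m → ℝ := fun i => rhoFun α β (z i) ζ₁ with hρdef
  have hρ : ∀ i, 0 < ρ i := fun i => rho_pos hα hβ (hz i) hζ
  -- row computation for p*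
  have hrow : ∀ i,
      α * Real.sqrt (∑ j, A i j ^ 2 / pstar α β A ζ₁ i j) +
        β * ⨆ j, |A i j| / pstar α β A ζ₁ i j = ζ₁ := by
    intro i
    have hρne := (hρ i).ne'
    have hzne := (hz i).ne'
    have hsum : ∑ j, A i j ^ 2 / pstar α β A ζ₁ i j = z i ^ 2 / ρ i := by
      have hterm : ∀ j, A i j ^ 2 / pstar α β A ζ₁ i j = |A i j| * (z i / ρ i) := by
        intro j
        show A i j ^ 2 / (ρ i * |A i j| / z i) = |A i j| * (z i / ρ i)
        by_cases h : A i j = 0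
        · simp [h]
        · have habs : (0:ℝ) < |A i j| := abs_pos.mpr h
          field_simp
          linear_combination (-1 : ℝ) * sq_abs (A i j)
      rw [Finset.sum_congr rfl (fun j _ => hterm j), ← Finset.sum_mul]
      show z i * (z i / ρ i) = z i ^ 2 / ρ i
      field_simp
    have hsqrt : Real.sqrt (z i ^ 2 / ρ i) = z i / Real.sqrt (ρ i) := by
      rw [Real.sqrt_div (sq_nonneg _), Real.sqrt_sq (hz i).le]
    have hsup : (⨆ j, |A i j| / pstar α β A ζ₁ i j) = z i / ρ i := by
      apply ciSup_eq_of
      · intro j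
        show |A i j| / (ρ i * |A i j| / z i) ≤ z i / ρ i
        by_cases h : A i j = 0
        · rw [h, abs_zero, zero_div]
          exact div_nonneg (hz i).le (hρ i).le
        · have habs : (0:ℝ) < |A i j| := abs_pos.mpr h
          apply le_of_eq
          field_simp
      · obtain ⟨j, hj⟩ := hrows i
        refine ⟨j, ?_⟩
        show |A i j| / (ρ i * |A i j| / z i) = z i / ρ i
        have habs : (0:ℝ) < |A i j| := abs_pos.mpr hj
        field_simp
    rw [hsum, hsqrt, hsup]
    have := rho_eq hα hβ (hz i) hζ
    rw [mul_div_assoc, mul_div_assoc] at this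
    exact this
  have hpart1 : eps5 α β A (pstar α β A ζ₁) = ζ₁ := by
    unfold eps5
    simp only [hrow]
    exact ciSup_const
  refine ⟨hpart1, ?_⟩
  intro q hq0 hqsum hqpos
  rw [hpart1]
  set t : Fin m → ℝ := fun i => ∑ j, q i j with htdef
  have ht : ∀ i, 0 < t i := by
    intro i
    obtain ⟨j, hj⟩ := hrows i
    exact Finset.sum_pos' (fun j _ => hq0 i j) ⟨j, Finset.mem_univ j, hqpos i j hj⟩
  have hex : ∃ i, t i ≤ ρ i := by
    by_contra h
    push_neg at h
    have hlt : ∑ i, ρ i < ∑ i, t i :=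
      Finset.sum_lt_sum_of_nonempty Finset.univ_nonempty (fun i _ => h i)
    have h1 : ∑ i, ρ i = 1 := hρsum
    have h2 : ∑ i, t i = 1 := hqsum
    rw [h1, h2] at hlt
    exact lt_irrefl _ hlt
  obtain ⟨i₀, hi₀⟩ := hex
  have hbdd : BddAbove (Set.range fun j => |A i₀ j| / q i₀ j) :=
    Set.Finite.bddAbove (Set.finite_range _)
  have hsup0 : 0 ≤ ⨆ j, |A i₀ j| / q i₀ j := by
    obtain ⟨j', _⟩ := hrows i₀
    exact le_trans (div_nonneg (abs_nonneg _) (hq0 i₀ j')) (le_ciSup hbdd j')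
  have hsupq : z i₀ / t i₀ ≤ ⨆ j, |A i₀ j| / q i₀ j := by
    rw [div_le_iff₀ (ht i₀)]
    have hb : ∀ j, |A i₀ j| ≤ (⨆ j, |A i₀ j| / q i₀ j) * q i₀ j := by
      intro j
      by_cases h : A i₀ j = 0
      · rw [h, abs_zero]
        exact mul_nonneg hsup0 (hq0 i₀ j)
      · have hq : 0 < q i₀ j := hqpos i₀ j h
        have h1 : |A i₀ j| / q i₀ j ≤ ⨆ j, |A i₀ j| / q i₀ j := le_ciSup hbdd j
        calc |A i₀ j| = |A i₀ j| / q i₀ j * q i₀ j := (div_mul_cancel₀ _ hq.ne').symm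
          _ ≤ _ := mul_le_mul_of_nonneg_right h1 hq.le
    calc z i₀ = ∑ j, |A i₀ j| := rfl
      _ ≤ ∑ j, (⨆ j, |A i₀ j| / q i₀ j) * q i₀ j := Finset.sum_le_sum (fun j _ => hb j)
      _ = (⨆ j, |A i₀ j| / q i₀ j) * t i₀ := by rw [← Finset.mul_sum]
  have hcs : z i₀ ^ 2 / t i₀ ≤ ∑ j, A i₀ j ^ 2 / q i₀ j := by
    set sset := Finset.univ.filter (fun j => A i₀ j ≠ 0) with hsset
    have h1 : ∑ j ∈ sset, |A i₀ j| = z i₀ := by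
      rw [hsset]
      exact Finset.sum_filter_of_ne (fun j _ hj => abs_ne_zero.mp hj)
    have h2 : ∑ j ∈ sset, A i₀ j ^ 2 / q i₀ j = ∑ j, A i₀ j ^ 2 / q i₀ j := by
      rw [hsset]
      refine Finset.sum_filter_of_ne (fun j _ hj h => ?_)
      rw [h] at hj
      simp at hj
    have h3 : ∑ j ∈ sset, q i₀ j ≤ t i₀ :=
      Finset.sum_le_sum_of_subset_of_nonneg (Finset.filter_subset _ _) (fun j _ _ => hq0 i₀ j)
    have h4 : 0 < ∑ j ∈ sset, q i₀ j := by
      obtain ⟨j, hj⟩ := hrows i₀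
      refine Finset.sum_pos' (fun j' hj' => hq0 i₀ j') ⟨j, ?_, hqpos i₀ j hj⟩
      rw [hsset]
      simp [hj]
    have hsed := Finset.sq_sum_div_le_sum_sq_div sset (fun j => |A i₀ j|)
      (g := fun j => q i₀ j) (fun j hj => hqpos i₀ j (by simpa [hsset] using hj))
    calc z i₀ ^ 2 / t i₀ ≤ z i₀ ^ 2 / ∑ j ∈ sset, q i₀ j := by
          gcongr
      _ ≤ ∑ j ∈ sset, |A i₀ j| ^ 2 / q i₀ j := by rw [← h1]; exact hsed
      _ = ∑ j ∈ sset, A i₀ j ^ 2 / q i₀ j := by simp [sq_abs]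
      _ = ∑ j, A i₀ j ^ 2 / q i₀ j := h2
  have hfinal : ζ₁ ≤ α * Real.sqrt (∑ j, A i₀ j ^ 2 / q i₀ j) + β * ⨆ j, |A i₀ j| / q i₀ j := by
    have e1 : ζ₁ = α * z i₀ / Real.sqrt (ρ i₀) + β * z i₀ / ρ i₀ :=
      (rho_eq hα hβ (hz i₀) hζ).symm
    have e2 : α * z i₀ / Real.sqrt (ρ i₀) + β * z i₀ / ρ i₀ ≤
        α * z i₀ / Real.sqrt (t i₀) + β * z i₀ / t i₀ :=
      row_mono hα hβ (hz i₀) (ht i₀) hi₀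
    have e3 : α * z i₀ / Real.sqrt (t i₀) ≤ α * Real.sqrt (∑ j, A i₀ j ^ 2 / q i₀ j) := by
      have heq : z i₀ / Real.sqrt (t i₀) = Real.sqrt (z i₀ ^ 2 / t i₀) := by
        rw [Real.sqrt_div (sq_nonneg _), Real.sqrt_sq (hz i₀).le]
      rw [mul_div_assoc, heq]
      exact mul_le_mul_of_nonneg_left (Real.sqrt_le_sqrt hcs) hα.le
    have e4 : β * z i₀ / t i₀ ≤ β * ⨆ j, |A i₀ j| / q i₀ j := by
      rw [mul_div_assoc]
      exact mul_le_mul_of_nonneg_left hsupq hβ.le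
    linarith
  refine le_trans hfinal ?_
  unfold eps5
  exact le_ciSup (f := fun i => α * Real.sqrt (∑ j, A i j ^ 2 / q i j) +
      β * ⨆ j, |A i j| / q i j) (Set.Finite.bddAbove (Set.finite_range _)) i₀
end

section
/- Let A be an m×n real matrix all of whose rows are nonzero and such that min_i ‖A_(i)‖₁ ≥ max_j ‖A^(j)‖₁. Let ρ be a distribution over the rows with ρ_i > 0 and ∑_i ρ_i = 1, and set p i j = ρ_i·|A i j|/‖A_(i)‖₁. Then ε₆(p) ≤ ε₅(p). -/
open Matrix

/-- `ε₆(p) = max_j [ α·√(∑_i (A i j)²/p i j) + β·max_i |A i j|/p i j ]`. -/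
noncomputable def eps6 {m n : ℕ} (α β : ℝ) (A : Matrix (Fin m) (Fin n) ℝ)
    (p : Fin m → Fin n → ℝ) : ℝ :=
  ⨆ j, (α * Real.sqrt (∑ i, A i j ^ 2 / p i j) + β * ⨆ i, |A i j| / p i j)

/-- If every row of `A` is nonzero, `min_i ‖A_(i)‖₁ ≥ max_j ‖A^(j)‖₁`, and
`p i j = ρ_i·|A i j|/‖A_(i)‖₁` for a positive row distribution `ρ`, then `ε₆(p) ≤ ε₅(p)`. -/
theorem stmt14 (m n : ℕ) (hm : 0 < m) (hn : 0 < n)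
    (A : Matrix (Fin m) (Fin n) ℝ) (hrows : ∀ i, ∃ j, A i j ≠ 0)
    (hskew : ∀ i j, (∑ i', |A i' j|) ≤ ∑ j', |A i j'|)
    (s : ℕ) (hs : 1 ≤ s) (δ : ℝ) (hδ : δ ∈ Set.Ioo (0 : ℝ) 1)
    (ρ : Fin m → ℝ) (hρ : ∀ i, 0 < ρ i) (hρsum : ∑ i, ρ i = 1) :
    eps6 (alphaC m n s δ) (betaC m n s δ) A
        (fun i j => ρ i * |A i j| / ∑ j', |A i j'|) ≤
      eps5 (alphaC m n s δ) (betaC m n s δ) A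
        (fun i j => ρ i * |A i j| / ∑ j', |A i j'|) := by
  obtain ⟨hδ0, hδ1⟩ := hδ
  haveI : Nonempty (Fin m) := ⟨⟨0, hm⟩⟩
  haveI : Nonempty (Fin n) := ⟨⟨0, hn⟩⟩
  set α := alphaC m n s δ with hαdef
  set β := betaC m n s δ with hβdef
  have hα0 : 0 ≤ α := Real.sqrt_nonneg _
  have hβ0 : 0 ≤ β := by
    have h1 : (1 : ℝ) ≤ (m + n : ℝ) / δ := by
      rw [le_div_iff₀ hδ0]
      have : (1 : ℝ) ≤ (m : ℝ) + n := by
        have : (1 : ℝ) ≤ (m : ℝ) := by exact_mod_cast hm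
        have hn' : (0 : ℝ) ≤ (n : ℝ) := Nat.cast_nonneg n
        linarith
      nlinarith
    have := Real.log_nonneg h1
    have hs' : (0 : ℝ) ≤ 3 * s := by positivity
    exact div_nonneg this hs'
  -- row sums are positive
  have hR : ∀ i, 0 < ∑ j', |A i j'| := by
    intro i
    obtain ⟨j, hj⟩ := hrows i
    exact Finset.sum_pos' (fun j' _ => abs_nonneg _)
      ⟨j, Finset.mem_univ j, abs_pos.2 hj⟩
  -- key pointwise identities
  have key1 : ∀ i j, A i j ^ 2 / (ρ i * |A i j| / ∑ j', |A i j'|)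
      = |A i j| * ((∑ j', |A i j'|) / ρ i) := by
    intro i j
    rcases eq_or_ne (A i j) 0 with h | h
    · simp [h]
    · have habs : |A i j| ≠ 0 := abs_ne_zero.2 h
      have hρi : ρ i ≠ 0 := (hρ i).ne'
      have hRi : (∑ j', |A i j'|) ≠ 0 := (hR i).ne'
      field_simp
      rw [← sq_abs (A i j)]
  have key2 : ∀ i j, A i j ≠ 0 →
      |A i j| / (ρ i * |A i j| / ∑ j', |A i j'|) = (∑ j', |A i j'|) / ρ i := by
    intro i j h
    have habs : |A i j| ≠ 0 := abs_ne_zero.2 h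
    have hρi : ρ i ≠ 0 := (hρ i).ne'
    have hRi : (∑ j', |A i j'|) ≠ 0 := (hR i).ne'
    field_simp
  have key2le : ∀ i j, |A i j| / (ρ i * |A i j| / ∑ j', |A i j'|)
      ≤ (∑ j', |A i j'|) / ρ i := by
    intro i j
    rcases eq_or_ne (A i j) 0 with h | h
    · simp [h]
      exact div_nonneg (Finset.sum_nonneg fun _ _ => abs_nonneg _) (hρ i).le
    · exact (key2 i j h).le
  -- choose the row maximizing R i / ρ i
  obtain ⟨i₀, hi₀⟩ := Finite.exists_max (fun i => (∑ j', |A i j'|) / ρ i)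
  have hQ0 : 0 ≤ (∑ j', |A i₀ j'|) / ρ i₀ :=
    div_nonneg (Finset.sum_nonneg fun _ _ => abs_nonneg _) (hρ i₀).le
  -- sum over row i₀
  have rowsum : ∑ j', A i₀ j' ^ 2 / (ρ i₀ * |A i₀ j'| / ∑ j'', |A i₀ j''|)
      = (∑ j', |A i₀ j'|) * ((∑ j', |A i₀ j'|) / ρ i₀) := by
    rw [Finset.sum_congr rfl fun j _ => key1 i₀ j, ← Finset.sum_mul]
  simp only [eps5, eps6]
  apply ciSup_le
  intro j
  have step : α * Real.sqrt (∑ i, A i j ^ 2 / (ρ i * |A i j| / ∑ j', |A i j'|)) +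
      β * ⨆ i, |A i j| / (ρ i * |A i j| / ∑ j', |A i j'|) ≤
      α * Real.sqrt (∑ j', A i₀ j' ^ 2 / (ρ i₀ * |A i₀ j'| / ∑ j'', |A i₀ j''|)) +
      β * ⨆ j', |A i₀ j'| / (ρ i₀ * |A i₀ j'| / ∑ j'', |A i₀ j''|) := by
    apply add_le_add
    · apply mul_le_mul_of_nonneg_left _ hα0
      apply Real.sqrt_le_sqrt
      rw [rowsum]
      calc ∑ i, A i j ^ 2 / (ρ i * |A i j| / ∑ j', |A i j'|)
          = ∑ i, |A i j| * ((∑ j', |A i j'|) / ρ i) :=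
            Finset.sum_congr rfl fun i _ => key1 i j
        _ ≤ ∑ i, |A i j| * ((∑ j', |A i₀ j'|) / ρ i₀) := by
            apply Finset.sum_le_sum
            intro i _
            exact mul_le_mul_of_nonneg_left (hi₀ i) (abs_nonneg _)
        _ = (∑ i, |A i j|) * ((∑ j', |A i₀ j'|) / ρ i₀) := by
            rw [Finset.sum_mul]
        _ ≤ (∑ j', |A i₀ j'|) * ((∑ j', |A i₀ j'|) / ρ i₀) :=
            mul_le_mul_of_nonneg_right (hskew i₀ j) hQ0
    · apply mul_le_mul_of_nonneg_left _ hβ0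
      have hub : (⨆ i, |A i j| / (ρ i * |A i j| / ∑ j', |A i j'|))
          ≤ (∑ j', |A i₀ j'|) / ρ i₀ := by
        apply ciSup_le
        intro i
        exact (key2le i j).trans (hi₀ i)
      obtain ⟨j₁, hj₁⟩ := hrows i₀
      have hlb : (∑ j', |A i₀ j'|) / ρ i₀
          ≤ ⨆ j', |A i₀ j'| / (ρ i₀ * |A i₀ j'| / ∑ j'', |A i₀ j''|) := by
        rw [← key2 i₀ j₁ hj₁]
        exact le_ciSup (f := fun j' => |A i₀ j'| / (ρ i₀ * |A i₀ j'| / ∑ j'', |A i₀ j''|))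
          (Finite.bddAbove_range _) j₁
      exact hub.trans hlb
  refine step.trans ?_
  exact le_ciSup (f := fun i => α * Real.sqrt (∑ j', A i j' ^ 2 / (ρ i * |A i j'| / ∑ j'', |A i j''|)) +
    β * ⨆ j', |A i j'| / (ρ i * |A i j'| / ∑ j'', |A i j''|)) (Finite.bddAbove_range _) i₀
end

section
/- Let A be an m×n real matrix all of whose rows are nonzero and such that min_i ‖A_(i)‖₁ ≥ max_j ‖A^(j)‖₁, and let p* be the algorithm's distribution. Then p* minimizes ε₄ = max{ε₅, ε₆}: for every sampling distribution q on the entries of A, max{ε₅(p*), ε₆(p*)} ≤ max{ε₅(q), ε₆(q)}. -/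
open Matrix

lemma rho_key (α β z ζ : ℝ) (hα : 0 ≤ α) (hβ : 0 < β) (hz : 0 < z) (hζ : 0 < ζ) :
    0 < rhoFun α β z ζ ∧
    α * (z / Real.sqrt (rhoFun α β z ζ)) + β * (z / rhoFun α β z ζ) = ζ := by
  obtain ⟨a, ha_def⟩ : ∃ x : ℝ, x = α * z / (2 * ζ) := ⟨_, rfl⟩
  obtain ⟨b, hb_def⟩ : ∃ x : ℝ, x = β * z / ζ := ⟨_, rfl⟩
  have ha : 0 ≤ a := ha_def ▸ by positivity
  have hb : 0 < b := hb_def ▸ by positivity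
  have hs2 : Real.sqrt (a ^ 2 + b) ^ 2 = a ^ 2 + b := Real.sq_sqrt (by positivity)
  have hspos : 0 < Real.sqrt (a ^ 2 + b) := Real.sqrt_pos.mpr (by positivity)
  obtain ⟨t, ht_def⟩ : ∃ x : ℝ, x = a + Real.sqrt (a ^ 2 + b) := ⟨_, rfl⟩
  have hrho : rhoFun α β z ζ = t ^ 2 := by rw [rhoFun, ht_def, ha_def, hb_def]
  have ht : 0 < t := ht_def ▸ add_pos_of_nonneg_of_pos ha hspos
  have hquad : ζ * t ^ 2 = α * z * t + β * z := by
    have h1 : t ^ 2 = 2 * a * t + b := by rw [ht_def]; linear_combination hs2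
    have h2 : 2 * ζ * a = α * z := by rw [ha_def]; field_simp
    have h3 : ζ * b = β * z := by rw [hb_def]; field_simp
    calc ζ * t ^ 2 = (2 * ζ * a) * t + ζ * b := by rw [h1]; ring
    _ = α * z * t + β * z := by rw [h2, h3]
  refine ⟨hrho ▸ by positivity, ?_⟩
  rw [hrho, Real.sqrt_sq ht.le]
  field_simp
  linear_combination -hquad

/-- Per-entry identity for the squared term. -/
lemma term1 (x ρ z : ℝ) (hρ : 0 < ρ) (hz : 0 < z) :
    x ^ 2 / (ρ * |x| / z) = |x| * (z / ρ) := by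
  by_cases hx : x = 0
  · simp [hx]
  · have h1 : |x| ≠ 0 := abs_ne_zero.mpr hx
    rw [← sq_abs x]
    field_simp

/-- Per-entry identity for the abs term (nonzero entry). -/
lemma term2 (x ρ z : ℝ) (hρ : 0 < ρ) (hz : 0 < z) (hx : x ≠ 0) :
    |x| / (ρ * |x| / z) = z / ρ := by
  have h1 : |x| ≠ 0 := abs_ne_zero.mpr hx
  field_simp

/-- If every row of `A` is nonzero and `min_i ‖A_(i)‖₁ ≥ max_j ‖A^(j)‖₁`, then the
algorithm's distribution `p*` minimizes `ε₄ = max{ε₅, ε₆}` over all sampling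
distributions on the entries of `A`. -/
theorem stmt15 (m n : ℕ) (hm : 0 < m) (hn : 0 < n)
    (A : Matrix (Fin m) (Fin n) ℝ) (hrows : ∀ i, ∃ j, A i j ≠ 0)
    (hskew : ∀ i j, (∑ i', |A i' j|) ≤ ∑ j', |A i j'|)
    (s : ℕ) (hs : 1 ≤ s) (δ : ℝ) (hδ : δ ∈ Set.Ioo (0 : ℝ) 1)
    (ζ₁ : ℝ) (hζ : 0 < ζ₁)
    (hρsum : ∑ i, rhoFun (alphaC m n s δ) (betaC m n s δ) (∑ j, |A i j|) ζ₁ = 1) :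
    ∀ q : Fin m → Fin n → ℝ, (∀ i j, 0 ≤ q i j) → (∑ i, ∑ j, q i j) = 1 →
      (∀ i j, A i j ≠ 0 → 0 < q i j) →
      max (eps5 (alphaC m n s δ) (betaC m n s δ) A
              (pstar (alphaC m n s δ) (betaC m n s δ) A ζ₁))
          (eps6 (alphaC m n s δ) (betaC m n s δ) A
              (pstar (alphaC m n s δ) (betaC m n s δ) A ζ₁)) ≤
        max (eps5 (alphaC m n s δ) (betaC m n s δ) A q)
          (eps6 (alphaC m n s δ) (betaC m n s δ) A q) := by
  intro q hq0 hq1 hq2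
  obtain ⟨hδ0, hδ1⟩ := hδ
  haveI : Nonempty (Fin m) := Fin.pos_iff_nonempty.mp hm
  haveI : Nonempty (Fin n) := Fin.pos_iff_nonempty.mp hn
  have hs0 : (0:ℝ) < (s:ℝ) := by exact_mod_cast hs
  have hL' : 0 < Real.log (((m : ℝ) + (n : ℝ)) / δ) := by
    apply Real.log_pos
    rw [lt_div_iff₀ hδ0]
    have h1 : (1:ℝ) ≤ (m:ℝ) := by exact_mod_cast hm
    have h2 : (1:ℝ) ≤ (n:ℝ) := by exact_mod_cast hn
    nlinarith
  have hα : 0 < alphaC m n s δ := Real.sqrt_pos.mpr (div_pos hL' hs0)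
  have hβ : 0 < betaC m n s δ := div_pos hL' (by linarith)
  set α := alphaC m n s δ with hαdef
  set β := betaC m n s δ with hβdef
  have hz : ∀ i, 0 < ∑ j, |A i j| := by
    intro i
    obtain ⟨j0, hj0⟩ := hrows i
    exact Finset.sum_pos' (fun j _ => abs_nonneg _)
      ⟨j0, Finset.mem_univ _, abs_pos.mpr hj0⟩
  have hrk : ∀ i, 0 < rhoFun α β (∑ j, |A i j|) ζ₁ ∧
      α * ((∑ j, |A i j|) / Real.sqrt (rhoFun α β (∑ j, |A i j|) ζ₁)) +
        β * ((∑ j, |A i j|) / rhoFun α β (∑ j, |A i j|) ζ₁) = ζ₁ :=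
    fun i => rho_key α β _ ζ₁ hα.le hβ (hz i) hζ
  -- Fact A: every row value of p* equals ζ₁
  have hterm1 : ∀ i j, A i j ^ 2 / pstar α β A ζ₁ i j =
      |A i j| * ((∑ j', |A i j'|) / rhoFun α β (∑ j', |A i j'|) ζ₁) := by
    intro i j
    simp only [pstar]
    exact term1 _ _ _ (hrk i).1 (hz i)
  have hsumrow : ∀ i, ∑ j, A i j ^ 2 / pstar α β A ζ₁ i j =
      (∑ j', |A i j'|) * ((∑ j', |A i j'|) / rhoFun α β (∑ j', |A i j'|) ζ₁) := by
    intro i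
    rw [Finset.sum_congr rfl fun j _ => hterm1 i j, ← Finset.sum_mul]
  have hsqrtrow : ∀ i, Real.sqrt ((∑ j', |A i j'|) *
        ((∑ j', |A i j'|) / rhoFun α β (∑ j', |A i j'|) ζ₁)) =
      (∑ j', |A i j'|) / Real.sqrt (rhoFun α β (∑ j', |A i j'|) ζ₁) := by
    intro i
    rw [show (∑ j', |A i j'|) * ((∑ j', |A i j'|) / rhoFun α β (∑ j', |A i j'|) ζ₁)
        = (∑ j', |A i j'|) ^ 2 / rhoFun α β (∑ j', |A i j'|) ζ₁ from by ring,
      Real.sqrt_div (sq_nonneg _), Real.sqrt_sq (hz i).le]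
  have hsuprow : ∀ i, (⨆ j, |A i j| / pstar α β A ζ₁ i j) =
      (∑ j', |A i j'|) / rhoFun α β (∑ j', |A i j'|) ζ₁ := by
    intro i
    apply le_antisymm
    · apply ciSup_le
      intro j
      by_cases hx : A i j = 0
      · simp only [pstar, hx, abs_zero, mul_zero, zero_div]
        exact div_nonneg (Finset.sum_nonneg fun j' _ => abs_nonneg _) (hrk i).1.le
      · simp only [pstar]
        rw [term2 _ _ _ (hrk i).1 (hz i) hx]
    · obtain ⟨j0, hj0⟩ := hrows i
      have h := term2 (A i j0) (rhoFun α β (∑ j', |A i j'|) ζ₁) (∑ j', |A i j'|)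
        (hrk i).1 (hz i) hj0
      calc (∑ j', |A i j'|) / rhoFun α β (∑ j', |A i j'|) ζ₁
          = |A i j0| / pstar α β A ζ₁ i j0 := by simp only [pstar]; rw [h]
        _ ≤ ⨆ j, |A i j| / pstar α β A ζ₁ i j :=
            le_ciSup (f := fun j => |A i j| / pstar α β A ζ₁ i j)
              (Set.Finite.bddAbove (Set.finite_range _)) j0
  have rowA : ∀ i, α * Real.sqrt (∑ j, A i j ^ 2 / pstar α β A ζ₁ i j)
      + β * ⨆ j, |A i j| / pstar α β A ζ₁ i j = ζ₁ := by
    intro i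
    rw [hsumrow i, hsqrtrow i, hsuprow i]
    exact (hrk i).2
  have e5a : eps5 α β A (pstar α β A ζ₁) ≤ ζ₁ := by
    rw [eps5]
    exact ciSup_le fun i => (rowA i).le
  -- Fact B: every column value of p* is at most ζ₁
  have e6b : eps6 α β A (pstar α β A ζ₁) ≤ ζ₁ := by
    rw [eps6]
    apply ciSup_le
    intro j
    by_cases hcol : ∀ i, A i j = 0
    · have h1 : ∑ i, A i j ^ 2 / pstar α β A ζ₁ i j = 0 :=
        Finset.sum_eq_zero fun i _ => by simp [hcol i]
      have h2 : (⨆ i, |A i j| / pstar α β A ζ₁ i j) = 0 := by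
        simp only [hcol, abs_zero, zero_div]
        exact ciSup_const
      rw [h1, h2]
      simp only [Real.sqrt_zero, mul_zero, add_zero]
      exact hζ.le
    · push_neg at hcol
      obtain ⟨i1, hi1⟩ := hcol
      obtain ⟨i0, hi0S, hi0max⟩ := Finset.exists_max_image
        (Finset.univ.filter fun i => A i j ≠ 0)
        (fun i => (∑ j', |A i j'|) / rhoFun α β (∑ j', |A i j'|) ζ₁)
        ⟨i1, by simp [hi1]⟩
      have hw0 : 0 ≤ (∑ j', |A i0 j'|) / rhoFun α β (∑ j', |A i0 j'|) ζ₁ :=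
        div_nonneg (Finset.sum_nonneg fun j' _ => abs_nonneg _) (hrk i0).1.le
      have hsum : ∑ i, A i j ^ 2 / pstar α β A ζ₁ i j ≤
          (∑ j', |A i0 j'|) * ((∑ j', |A i0 j'|) / rhoFun α β (∑ j', |A i0 j'|) ζ₁) := by
        calc ∑ i, A i j ^ 2 / pstar α β A ζ₁ i j
            = ∑ i, |A i j| * ((∑ j', |A i j'|) / rhoFun α β (∑ j', |A i j'|) ζ₁) :=
              Finset.sum_congr rfl fun i _ => by
                simp only [pstar]; exact term1 _ _ _ (hrk i).1 (hz i)
          _ ≤ ∑ i, |A i j| * ((∑ j', |A i0 j'|) / rhoFun α β (∑ j', |A i0 j'|) ζ₁) := by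
              apply Finset.sum_le_sum
              intro i _
              by_cases hx : A i j = 0
              · simp [hx]
              · exact mul_le_mul_of_nonneg_left
                  (hi0max i (by simp [hx])) (abs_nonneg _)
          _ = (∑ i, |A i j|) * ((∑ j', |A i0 j'|) / rhoFun α β (∑ j', |A i0 j'|) ζ₁) :=
              (Finset.sum_mul _ _ _).symm
          _ ≤ (∑ j', |A i0 j'|) * ((∑ j', |A i0 j'|) / rhoFun α β (∑ j', |A i0 j'|) ζ₁) :=
              mul_le_mul_of_nonneg_right (hskew i0 j) hw0
      have hsup : (⨆ i, |A i j| / pstar α β A ζ₁ i j) ≤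
          (∑ j', |A i0 j'|) / rhoFun α β (∑ j', |A i0 j'|) ζ₁ := by
        apply ciSup_le
        intro i
        by_cases hx : A i j = 0
        · simp only [hx, abs_zero, zero_div]
          exact hw0
        · simp only [pstar]
          rw [term2 _ _ _ (hrk i).1 (hz i) hx]
          exact hi0max i (by simp [hx])
      calc α * Real.sqrt (∑ i, A i j ^ 2 / pstar α β A ζ₁ i j)
            + β * ⨆ i, |A i j| / pstar α β A ζ₁ i j
          ≤ α * Real.sqrt ((∑ j', |A i0 j'|) *
              ((∑ j', |A i0 j'|) / rhoFun α β (∑ j', |A i0 j'|) ζ₁))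
            + β * ((∑ j', |A i0 j'|) / rhoFun α β (∑ j', |A i0 j'|) ζ₁) :=
            add_le_add (mul_le_mul_of_nonneg_left (Real.sqrt_le_sqrt hsum) hα.le)
              (mul_le_mul_of_nonneg_left hsup hβ.le)
        _ = ζ₁ := by rw [hsqrtrow i0]; exact (hrk i0).2
  -- Fact C: ζ₁ ≤ eps5 q
  have key : ζ₁ ≤ eps5 α β A q := by
    obtain ⟨i, hQρ⟩ : ∃ i, (∑ j, q i j) ≤ rhoFun α β (∑ j, |A i j|) ζ₁ := by
      by_contra h
      push_neg at h
      have h1 : (1:ℝ) < 1 := by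
        calc (1:ℝ) = ∑ i, rhoFun α β (∑ j, |A i j|) ζ₁ := hρsum.symm
          _ < ∑ i, ∑ j, q i j :=
            Finset.sum_lt_sum_of_nonempty ⟨Classical.arbitrary _, Finset.mem_univ _⟩
              fun i _ => h i
          _ = 1 := hq1
      exact absurd h1 (lt_irrefl _)
    obtain ⟨j0, hj0⟩ := hrows i
    have hQ : 0 < ∑ j, q i j :=
      lt_of_lt_of_le (hq2 i j0 hj0)
        (Finset.single_le_sum (fun j _ => hq0 i j) (Finset.mem_univ j0))
    have hqz : ∀ j, q i j = 0 → A i j = 0 := by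
      intro j h
      by_contra hA
      exact absurd h (hq2 i j hA).ne'
    -- Cauchy-Schwarz
    have hCS : (∑ j, |A i j|) ^ 2 ≤ (∑ j, A i j ^ 2 / q i j) * ∑ j, q i j := by
      have h := Finset.sum_mul_sq_le_sq_mul_sq Finset.univ
        (fun j => |A i j| / Real.sqrt (q i j)) (fun j => Real.sqrt (q i j))
      have h1 : ∀ j, |A i j| / Real.sqrt (q i j) * Real.sqrt (q i j) = |A i j| := by
        intro j
        by_cases hq : q i j = 0
        · simp [hq, hqz j hq]
        · rw [div_mul_cancel₀]
          exact Real.sqrt_ne_zero'.mpr (lt_of_le_of_ne (hq0 i j) (Ne.symm hq))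
      have h2 : ∀ j, (|A i j| / Real.sqrt (q i j)) ^ 2 = A i j ^ 2 / q i j := by
        intro j
        rw [div_pow, sq_abs, Real.sq_sqrt (hq0 i j)]
      have h3 : ∀ j, Real.sqrt (q i j) ^ 2 = q i j := fun j => Real.sq_sqrt (hq0 i j)
      calc (∑ j, |A i j|) ^ 2
          = (∑ j, |A i j| / Real.sqrt (q i j) * Real.sqrt (q i j)) ^ 2 := by
            rw [Finset.sum_congr rfl fun j _ => (h1 j)]
        _ ≤ (∑ j, (|A i j| / Real.sqrt (q i j)) ^ 2) * ∑ j, Real.sqrt (q i j) ^ 2 := h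
        _ = (∑ j, A i j ^ 2 / q i j) * ∑ j, q i j := by
            rw [Finset.sum_congr rfl fun j _ => (h2 j),
              Finset.sum_congr rfl fun j _ => (h3 j)]
    have hsumlb : (∑ j, |A i j|) ^ 2 / (∑ j, q i j) ≤ ∑ j, A i j ^ 2 / q i j :=
      (div_le_iff₀ hQ).mpr hCS
    -- sup lower bound
    have hbdd : BddAbove (Set.range fun j => |A i j| / q i j) :=
      Set.Finite.bddAbove (Set.finite_range _)
    have hMle : (∑ j, |A i j|) ≤ (⨆ j, |A i j| / q i j) * ∑ j, q i j := by
      calc ∑ j, |A i j| ≤ ∑ j, (⨆ j', |A i j'| / q i j') * q i j := by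
            apply Finset.sum_le_sum
            intro j _
            by_cases hq : q i j = 0
            · simp [hq, hqz j hq]
            · have hqpos : 0 < q i j := lt_of_le_of_ne (hq0 i j) (Ne.symm hq)
              calc |A i j| = |A i j| / q i j * q i j := by field_simp
                _ ≤ (⨆ j', |A i j'| / q i j') * q i j :=
                  mul_le_mul_of_nonneg_right
                    (le_ciSup (f := fun j' => |A i j'| / q i j') hbdd j) hqpos.le
        _ = (⨆ j', |A i j'| / q i j') * ∑ j, q i j := (Finset.mul_sum _ _ _).symm
    have hMlb : (∑ j, |A i j|) / (∑ j, q i j) ≤ ⨆ j, |A i j| / q i j :=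
      (div_le_iff₀ hQ).mpr hMle
    have hsq2 : (∑ j, |A i j|) / Real.sqrt (∑ j, q i j) =
        Real.sqrt ((∑ j, |A i j|) ^ 2 / (∑ j, q i j)) := by
      rw [Real.sqrt_div (sq_nonneg _), Real.sqrt_sq (hz i).le]
    have hrow : ζ₁ ≤ α * Real.sqrt (∑ j, A i j ^ 2 / q i j) + β * ⨆ j, |A i j| / q i j := by
      calc ζ₁ = α * ((∑ j, |A i j|) / Real.sqrt (rhoFun α β (∑ j, |A i j|) ζ₁)) +
            β * ((∑ j, |A i j|) / rhoFun α β (∑ j, |A i j|) ζ₁) := (hrk i).2.symm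
        _ ≤ α * Real.sqrt (∑ j, A i j ^ 2 / q i j) + β * ⨆ j, |A i j| / q i j := by
            apply add_le_add
            · apply mul_le_mul_of_nonneg_left _ hα.le
              calc (∑ j, |A i j|) / Real.sqrt (rhoFun α β (∑ j, |A i j|) ζ₁)
                  ≤ (∑ j, |A i j|) / Real.sqrt (∑ j, q i j) := by
                    gcongr
                _ = Real.sqrt ((∑ j, |A i j|) ^ 2 / (∑ j, q i j)) := hsq2
                _ ≤ Real.sqrt (∑ j, A i j ^ 2 / q i j) := Real.sqrt_le_sqrt hsumlb
            · apply mul_le_mul_of_nonneg_left _ hβ.le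
              calc (∑ j, |A i j|) / rhoFun α β (∑ j, |A i j|) ζ₁
                  ≤ (∑ j, |A i j|) / (∑ j, q i j) := by
                    gcongr
                _ ≤ ⨆ j, |A i j| / q i j := hMlb
    calc ζ₁ ≤ α * Real.sqrt (∑ j, A i j ^ 2 / q i j) + β * ⨆ j, |A i j| / q i j := hrow
      _ ≤ eps5 α β A q := by
        rw [eps5]
        exact le_ciSup (f := fun i => α * Real.sqrt (∑ j, A i j ^ 2 / q i j) +
          β * ⨆ j, |A i j| / q i j) (Set.Finite.bddAbove (Set.finite_range _)) i
  exact max_le (e5a.trans (key.trans (le_max_left _ _)))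
    (e6b.trans (key.trans (le_max_left _ _)))
end

section
/- Let A be an m×n real matrix all of whose rows are nonzero, let z_i = ‖A_(i)‖₁, and let ζ₁ > 0 satisfy ∑_{i=1}^m ρ_i(ζ₁) = 1. Then ζ₁ ≤ 2β·‖A‖₁ + α·√(∑_{i=1}^m ‖A_(i)‖₁²). -/
open Matrix

/-- If every row of `A` is nonzero, `z_i = ‖A_(i)‖₁`, and `ζ₁ > 0` satisfies
`∑_i ρ_i(ζ₁) = 1`, then `ζ₁ ≤ 2β·‖A‖₁ + α·√(∑_i ‖A_(i)‖₁²)`. -/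
theorem stmt17 (m n : ℕ) (hm : 0 < m) (hn : 0 < n)
    (A : Matrix (Fin m) (Fin n) ℝ) (hrows : ∀ i, ∃ j, A i j ≠ 0)
    (s : ℕ) (hs : 1 ≤ s) (δ : ℝ) (hδ : δ ∈ Set.Ioo (0 : ℝ) 1)
    (ζ₁ : ℝ) (hζ : 0 < ζ₁)
    (hρsum : ∑ i, rhoFun (alphaC m n s δ) (betaC m n s δ) (∑ j, |A i j|) ζ₁ = 1) :
    ζ₁ ≤ 2 * betaC m n s δ * (∑ i, ∑ j, |A i j|) +
      alphaC m n s δ * Real.sqrt (∑ i, (∑ j, |A i j|) ^ 2) := by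
  obtain ⟨hδ0, hδ1⟩ := hδ
  set α := alphaC m n s δ with hαdef
  set β := betaC m n s δ with hβdef
  have hα : 0 ≤ α := Real.sqrt_nonneg _
  have hlog : 0 ≤ Real.log ((m + n : ℝ) / δ) := by
    apply Real.log_nonneg
    rw [le_div_iff₀ hδ0]
    have h1 : (1:ℝ) ≤ (m:ℝ) := by exact_mod_cast hm
    have h2 : (0:ℝ) ≤ (n:ℝ) := Nat.cast_nonneg n
    nlinarith
  have hβ : 0 ≤ β := by
    rw [hβdef, betaC]
    positivity
  set z : Fin m → ℝ := fun i => ∑ j, |A i j| with hzdef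
  have hz : ∀ i, 0 ≤ z i := fun i => Finset.sum_nonneg fun j _ => abs_nonneg _
  set r : Fin m → ℝ := fun i =>
    α * z i / (2 * ζ₁) + Real.sqrt ((α * z i / (2 * ζ₁)) ^ 2 + β * z i / ζ₁) with hrdef
  have hr : ∀ i, 0 ≤ r i := fun i => add_nonneg (by positivity) (Real.sqrt_nonneg _)
  have hsum : ∑ i, (r i) ^ 2 = 1 := hρsum
  have hkey : ∀ i, ζ₁ * (r i) ^ 2 = α * z i * r i + β * z i := by
    intro i
    have h0 : 0 ≤ (α * z i / (2 * ζ₁)) ^ 2 + β * z i / ζ₁ := by positivity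
    have hsq := Real.sq_sqrt h0
    have hri : r i = α * z i / (2 * ζ₁) +
        Real.sqrt ((α * z i / (2 * ζ₁)) ^ 2 + β * z i / ζ₁) := by rw [hrdef]
    have hζ' : ζ₁ ≠ 0 := ne_of_gt hζ
    have hexp : (r i) ^ 2 = 2 * (α * z i / (2 * ζ₁)) * r i + β * z i / ζ₁ := by
      conv_lhs => rw [hri]
      rw [add_sq, hsq, hri]
      ring
    rw [hexp]
    field_simp
  have hcs : ∑ i, z i * r i ≤ Real.sqrt (∑ i, (z i) ^ 2) := by
    have h2 : (∑ i, z i * r i) ^ 2 ≤ (∑ i, (z i) ^ 2) * (∑ i, (r i) ^ 2) :=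
      Finset.sum_mul_sq_le_sq_mul_sq Finset.univ z r
    rw [hsum, mul_one] at h2
    have h3 : 0 ≤ ∑ i, z i * r i :=
      Finset.sum_nonneg fun i _ => mul_nonneg (hz i) (hr i)
    calc ∑ i, z i * r i = Real.sqrt ((∑ i, z i * r i) ^ 2) := by
          rw [Real.sqrt_sq h3]
      _ ≤ Real.sqrt (∑ i, (z i) ^ 2) := by
          apply Real.sqrt_le_sqrt; exact h2
  have hzsum : 0 ≤ ∑ i, z i := Finset.sum_nonneg fun i _ => hz i
  have hmain : ζ₁ = α * (∑ i, z i * r i) + β * (∑ i, z i) := by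
    calc ζ₁ = ζ₁ * ∑ i, (r i) ^ 2 := by rw [hsum, mul_one]
      _ = ∑ i, ζ₁ * (r i) ^ 2 := Finset.mul_sum _ _ _
      _ = ∑ i, (α * z i * r i + β * z i) := Finset.sum_congr rfl fun i _ => hkey i
      _ = α * (∑ i, z i * r i) + β * (∑ i, z i) := by
          rw [Finset.sum_add_distrib, Finset.mul_sum, Finset.mul_sum]
          congr 1
          apply Finset.sum_congr rfl
          intro i _
          ring
  have hA : (∑ i, ∑ j, |A i j|) = ∑ i, z i := rfl
  have hsq : Real.sqrt (∑ i, (∑ j, |A i j|) ^ 2) = Real.sqrt (∑ i, (z i) ^ 2) := rfl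
  rw [hA, hsq, hmain]
  have h4 : α * (∑ i, z i * r i) ≤ α * Real.sqrt (∑ i, (z i) ^ 2) :=
    mul_le_mul_of_nonneg_left hcs hα
  nlinarith
end
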